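/- arXiv:2505.09136 — 4 statements merged into one kernel-verified Lean document; each statement's English description precedes it below -/
import Mathlib

section
/- For every integer n ≥ 5, the characteristic polynomial of A(K_n,H_1(0,n−4)^−) satisfies det(λI − A(K_n,H_1(0,n−4)^−)) = (λ+1)^{n−4}(λ−1)(λ³ + (5−n)λ² + (11−4n)λ + 13n − 57). -/
open Matrix

/-- The signed-complete-graph matrix `A(K_n, H^-)`: zero diagonal, `-1` on edges of `H`
(vertices labelled `1, …, n`, index `i : Fin n` corresponds to label `i+1`), `+1` otherwise. -/
noncomputable def signMat (n : ℕ) (E : ℕ → ℕ → Prop) : Matrix (Fin n) (Fin n) ℝ :=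
  open scoped Classical in
  Matrix.of fun i j => if i = j then 0 else if E ((i : ℕ) + 1) ((j : ℕ) + 1) then -1 else 1

/-- The largest eigenvalue of a real matrix (the supremum of its spectrum). -/
noncomputable def lam1 {n : ℕ} (M : Matrix (Fin n) (Fin n) ℝ) : ℝ :=
  sSup (spectrum ℝ M)

/-- `{i, j} = {a, b}` as an (unordered) edge. -/
def adjPair (a b i j : ℕ) : Prop := (i = a ∧ j = b) ∨ (i = b ∧ j = a)

/-- `U₁`: triangle `1 2 3` together with the pendant edges `{1, i}` for `4 ≤ i ≤ n`;
i.e. vertex `1` is adjacent to every other vertex, plus the edge `{2,3}`. -/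
def U1edge (i j : ℕ) : Prop :=
  (i = 1 ∧ 2 ≤ j) ∨ (j = 1 ∧ 2 ≤ i) ∨ adjPair 2 3 i j

/-- `D_{1,n-3}`: edges `{1,2}`, `{2,3}` and `{3,i}` for `4 ≤ i ≤ n`. -/
def Dedge (i j : ℕ) : Prop :=
  adjPair 1 2 i j ∨ adjPair 2 3 i j ∨ (i = 3 ∧ 4 ≤ j) ∨ (j = 3 ∧ 4 ≤ i)

/-- `U₂`: triangles `1 2 3` and `1 4 5` sharing vertex `1`, plus pendant edges `{1,i}`
for `6 ≤ i ≤ n`; i.e. vertex `1` adjacent to all, plus edges `{2,3}` and `{4,5}`. -/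
def U2edge (i j : ℕ) : Prop :=
  (i = 1 ∧ 2 ≤ j) ∨ (j = 1 ∧ 2 ≤ i) ∨ adjPair 2 3 i j ∨ adjPair 4 5 i j

/-- `H₁(s,t)` on `n = s + t + 4` vertices: triangle `1 2 3`, `s` pendant vertices
`5, …, s+4` at vertex `1`, vertex `4` adjacent to `1`, and `t` pendant vertices
`s+5, …, s+t+4` at vertex `4`. -/
def H1edge (s t : ℕ) (i j : ℕ) : Prop :=
  adjPair 1 2 i j ∨ adjPair 1 3 i j ∨ adjPair 2 3 i j ∨ adjPair 1 4 i j ∨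
  (i = 1 ∧ 5 ≤ j ∧ j ≤ s + 4) ∨ (j = 1 ∧ 5 ≤ i ∧ i ≤ s + 4) ∨
  (i = 4 ∧ s + 5 ≤ j ∧ j ≤ s + t + 4) ∨ (j = 4 ∧ s + 5 ≤ i ∧ i ≤ s + t + 4)

/-- `H₂(s,t)` on `n = s + t + 5` vertices: triangle `1 2 3`, edges `{1,4}` and `{4,5}`,
`s` pendant vertices `6, …, s+5` at vertex `4`, and `t` pendant vertices
`s+6, …, s+t+5` at vertex `5`. -/
def H2edge (s t : ℕ) (i j : ℕ) : Prop :=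
  adjPair 1 2 i j ∨ adjPair 1 3 i j ∨ adjPair 2 3 i j ∨ adjPair 1 4 i j ∨ adjPair 4 5 i j ∨
  (i = 4 ∧ 6 ≤ j ∧ j ≤ s + 5) ∨ (j = 4 ∧ 6 ≤ i ∧ i ≤ s + 5) ∨
  (i = 5 ∧ s + 6 ≤ j ∧ j ≤ s + t + 5) ∨ (j = 5 ∧ s + 6 ≤ i ∧ i ≤ s + t + 5)

/-- `K_{1,s} ∪ t·P₂` on `n = s + 1 + 2t` vertices: star with center `1` and leaves
`2, …, s+1`, together with the `t` disjoint edges `{s+2k+2, s+2k+3}`, `0 ≤ k < t`. -/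
def starMatchEdge (s t : ℕ) (i j : ℕ) : Prop :=
  (i = 1 ∧ 2 ≤ j ∧ j ≤ s + 1) ∨ (j = 1 ∧ 2 ≤ i ∧ i ≤ s + 1) ∨
  (∃ k, k < t ∧ adjPair (s + 2 * k + 2) (s + 2 * k + 3) i j)

/-- The quotient matrix `Q₃(s,t)`. -/
noncomputable def Q3 (s t : ℕ) : Matrix (Fin 6) (Fin 6) ℝ :=
  !![0, -1, -1, -1, -(s : ℝ), (t : ℝ);
     -1, 0, -1, 1, (s : ℝ), (t : ℝ);
     -1, -1, 0, 1, (s : ℝ), (t : ℝ);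
     -1, 1, 1, 0, (s : ℝ), -(t : ℝ);
     -1, 1, 1, 1, (s : ℝ) - 1, (t : ℝ);
     1, 1, 1, -1, (s : ℝ), (t : ℝ) - 1]

/-- The quotient matrix `Q₄(s,t)`. -/
noncomputable def Q4 (s t : ℕ) : Matrix (Fin 7) (Fin 7) ℝ :=
  !![0, -1, -1, -1, 1, (s : ℝ), (t : ℝ);
     -1, 0, -1, 1, 1, (s : ℝ), (t : ℝ);
     -1, -1, 0, 1, 1, (s : ℝ), (t : ℝ);
     -1, 1, 1, 0, -1, -(s : ℝ), (t : ℝ);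
     1, 1, 1, -1, 0, (s : ℝ), -(t : ℝ);
     1, 1, 1, -1, 1, (s : ℝ) - 1, (t : ℝ);
     1, 1, 1, 1, -1, (s : ℝ), (t : ℝ) - 1]

namespace Stmt10Aux

def m0 (x : ℝ) (a b : ℕ) : ℝ :=
  if a = b then x
  else if (a < 3 ∧ b < 3) ∨ (a = 0 ∧ b = 3) ∨ (a = 3 ∧ b = 0) ∨ (a = 3 ∧ 4 ≤ b) ∨ (b = 3 ∧ 4 ≤ a)
  then 1 else -1

def e0 (a b : ℕ) : ℝ := if (a = 1 ∧ b = 2) ∨ (a = 4 ∧ 5 ≤ b) then -1 else 0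

def p0 (a b : ℕ) : ℝ := if a = b then 1 else e0 a b

def B0 (n : ℕ) (x : ℝ) (a b : ℕ) : ℝ :=
  if b = 2 then (if a = 2 then x - 1 else 0)
  else if 5 ≤ b then (if a = b then x + 1 else 0)
  else if a = 0 then (if b = 0 then x else if b = 3 then 1 else if b = 4 then -1 else 1)
  else if a = 1 then (if b = 0 then 2 else if b = 1 then x + 1 else -2)
  else if a = 2 then (if b ≤ 1 then 1 else -1)
  else if a = 3 then (if b = 0 then 1 else if b = 1 then -1 else if b = 3 then x else 1)
  else if a = 4 then
    (if b = 3 then (n : ℝ) - 4 else if b = 4 then x - (n : ℝ) + 5 else -((n : ℝ) - 4))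
  else (if b = 3 then 1 else -1)

def SBval (n : ℕ) (x : ℝ) (b : ℕ) : ℝ :=
  if b = 2 then 0 else if 5 ≤ b then x + 1 else ((n : ℝ) - 5) * B0 n x 5 b

def g (x : ℝ) (m : ℕ) : ℝ :=
  if m = 0 ∨ m = 1 ∨ m = 3 ∨ m = 4 then 1 else if m = 2 then x - 1 else x + 1

lemma B0_b2 {n : ℕ} {x : ℝ} {a : ℕ} (hm : a ≠ 2) : B0 n x a 2 = 0 := by
  unfold B0; rw [if_pos rfl, if_neg hm]

lemma B0_ge5 {n : ℕ} {x : ℝ} {a b : ℕ} (hb : 5 ≤ b) :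
    B0 n x a b = if a = b then x + 1 else 0 := by
  unfold B0; rw [if_neg (by omega), if_pos hb]

lemma B0_tail {n : ℕ} {x : ℝ} {a b : ℕ} (h2 : b ≠ 2) (h5 : ¬ 5 ≤ b) (hm : 5 ≤ a) :
    B0 n x a b = if b = 3 then 1 else -1 := by
  unfold B0
  rw [if_neg h2, if_neg h5, if_neg (by omega), if_neg (by omega), if_neg (by omega),
    if_neg (by omega), if_neg (by omega)]

lemma e0_right2 {a b : ℕ} (h : b = 2) : e0 a b = if a = 1 then -1 else 0 := by
  unfold e0; split_ifs <;> first | rfl | (exfalso; omega)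

lemma e0_right5 {a b : ℕ} (h : 5 ≤ b) : e0 a b = if a = 4 then -1 else 0 := by
  unfold e0; split_ifs <;> first | rfl | (exfalso; omega)

lemma e0_right0 {a b : ℕ} (h2 : b ≠ 2) (h5 : ¬ 5 ≤ b) : e0 a b = 0 := by
  unfold e0; rw [if_neg (by omega)]

lemma e0_left1 {a b : ℕ} (h : a = 1) : e0 a b = if b = 2 then -1 else 0 := by
  unfold e0; split_ifs <;> first | rfl | (exfalso; omega)

lemma e0_left4 {a b : ℕ} (h : a = 4) : e0 a b = if 5 ≤ b then -1 else 0 := by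
  unfold e0; split_ifs <;> first | rfl | (exfalso; omega)

lemma e0_left0 {a b : ℕ} (h1 : a ≠ 1) (h4 : a ≠ 4) : e0 a b = 0 := by
  unfold e0; rw [if_neg (by omega)]

lemma p0_split (a b : ℕ) : p0 a b = (if a = b then (1 : ℝ) else 0) + e0 a b := by
  unfold p0 e0
  split_ifs <;> first | ring1 | (exfalso; omega)

lemma sum_tail (n : ℕ) (hn : 5 ≤ n) (g : ℕ → ℝ) (c : ℝ) (hg : ∀ m, 5 ≤ m → g m = c) :
    ∑ m ∈ Finset.range n, (if 5 ≤ m then g m else 0) = ((n : ℝ) - 5) * c := by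
  induction n, hn using Nat.le_induction with
  | base => norm_num [Finset.sum_range_succ]
  | succ n hn ih =>
      rw [Finset.sum_range_succ, ih, if_pos hn, hg n hn]
      push_cast
      ring

lemma sumB (n : ℕ) (hn : 5 ≤ n) (x : ℝ) (b : ℕ) (hb : b < n) :
    ∑ m ∈ Finset.range n, (if 5 ≤ m then B0 n x m b else 0) = SBval n x b := by
  by_cases hb2 : b = 2
  · subst hb2
    rw [SBval, if_pos rfl]
    have h := sum_tail n hn (fun m => B0 n x m 2) 0 (fun m hm => B0_b2 (by omega))
    rw [h]; ring
  · by_cases hb5 : 5 ≤ b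
    · rw [SBval, if_neg hb2, if_pos hb5]
      rw [Finset.sum_eq_single_of_mem b (Finset.mem_range.2 hb)]
      · rw [if_pos hb5, B0_ge5 hb5, if_pos rfl]
      · intro m _ hm
        rw [B0_ge5 hb5, if_neg hm]
        split_ifs <;> rfl
    · rw [SBval, if_neg hb2, if_neg hb5]
      exact sum_tail n hn _ _ fun m hm => by
        rw [B0_tail hb2 hb5 hm, B0_tail hb2 hb5 (by norm_num)]

set_option maxHeartbeats 1000000 in
lemma entry (n : ℕ) (hn : 5 ≤ n) (x : ℝ) (a b : ℕ) (ha : a < n) (hb : b < n) :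
    m0 x a b + (if b = 2 then -(m0 x a 1) else if 5 ≤ b then -(m0 x a 4) else 0)
      = B0 n x a b +
        (if a = 1 then -(B0 n x 2 b) else if a = 4 then -(SBval n x b) else 0) := by
  have ha' : a = 0 ∨ a = 1 ∨ a = 2 ∨ a = 3 ∨ a = 4 ∨ 5 ≤ a := by omega
  have hb' : b = 0 ∨ b = 1 ∨ b = 2 ∨ b = 3 ∨ b = 4 ∨ 5 ≤ b := by omega
  rcases ha' with rfl | rfl | rfl | rfl | rfl | ha' <;>
    rcases hb' with rfl | rfl | rfl | rfl | rfl | hb'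
  all_goals try (norm_num [m0, B0, SBval])
  all_goals first
    | ring1
    | (split_ifs <;> first | ring1 | (exfalso; omega))

noncomputable def Mm (n : ℕ) (x : ℝ) : Matrix (Fin n) (Fin n) ℝ := of fun i j => m0 x i.1 j.1
noncomputable def Pm (n : ℕ) : Matrix (Fin n) (Fin n) ℝ := of fun i j => p0 i.1 j.1
noncomputable def Bm (n : ℕ) (x : ℝ) : Matrix (Fin n) (Fin n) ℝ := of fun i j => B0 n x i.1 j.1

lemma fin_sum_single {n : ℕ} (c : ℕ) (hc : c < n) (f : Fin n → ℝ)
    (h0 : ∀ k : Fin n, k.1 ≠ c → f k = 0) : ∑ k : Fin n, f k = f ⟨c, hc⟩ := by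
  refine Finset.sum_eq_single_of_mem (⟨c, hc⟩ : Fin n) (Finset.mem_univ _) fun k _ hk => ?_
  exact h0 k fun h => hk (Fin.ext h)

lemma mulMP (n : ℕ) (hn : 5 ≤ n) (x : ℝ) : Mm n x * Pm n = Pm n * Bm n x := by
  ext i j
  have hi : i.1 < n := i.2
  have hj : j.1 < n := j.2
  rw [mul_apply, mul_apply]
  have hL : ∀ k : Fin n, Mm n x i k * Pm n k j
      = (if k.1 = j.1 then m0 x i.1 j.1 else 0) + m0 x i.1 k.1 * e0 k.1 j.1 := by
    intro k
    show m0 x i.1 k.1 * p0 k.1 j.1 = _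
    rw [p0_split, mul_add]
    congr 1
    split_ifs with h
    · rw [h, mul_one]
    · rw [mul_zero]
  have hR : ∀ k : Fin n, Pm n i k * Bm n x k j
      = (if i.1 = k.1 then B0 n x i.1 j.1 else 0) + e0 i.1 k.1 * B0 n x k.1 j.1 := by
    intro k
    show p0 i.1 k.1 * B0 n x k.1 j.1 = _
    rw [p0_split, add_mul]
    congr 1
    split_ifs with h
    · rw [one_mul, h]
    · rw [zero_mul]
  simp only [hL, hR]
  rw [Finset.sum_add_distrib, Finset.sum_add_distrib]
  have hd1 : ∑ k : Fin n, (if k.1 = j.1 then m0 x i.1 j.1 else 0) = m0 x i.1 j.1 := by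
    rw [fin_sum_single j.1 hj _ (fun k hk => if_neg hk)]
    rw [if_pos rfl]
  have hd2 : ∑ k : Fin n, (if i.1 = k.1 then B0 n x i.1 j.1 else 0) = B0 n x i.1 j.1 := by
    rw [fin_sum_single i.1 hi _ (fun k hk => if_neg (fun h => hk h.symm))]
    rw [if_pos rfl]
  rw [hd1, hd2]
  have hT1 : ∑ k : Fin n, m0 x i.1 k.1 * e0 k.1 j.1
      = (if j.1 = 2 then -(m0 x i.1 1) else if 5 ≤ j.1 then -(m0 x i.1 4) else 0) := by
    by_cases h2 : j.1 = 2
    · rw [if_pos h2]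
      have hterm : ∀ k : Fin n, m0 x i.1 k.1 * e0 k.1 j.1
          = if k.1 = 1 then -(m0 x i.1 1) else 0 := by
        intro k
        rw [e0_right2 h2]
        split_ifs with h
        · rw [h]; ring
        · rw [mul_zero]
      simp only [hterm]
      rw [fin_sum_single 1 (by omega) _ (fun k hk => if_neg hk), if_pos rfl]
    · by_cases h5 : 5 ≤ j.1
      · rw [if_neg h2, if_pos h5]
        have hterm : ∀ k : Fin n, m0 x i.1 k.1 * e0 k.1 j.1
            = if k.1 = 4 then -(m0 x i.1 4) else 0 := by
          intro k
          rw [e0_right5 h5]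
          split_ifs with h
          · rw [h]; ring
          · rw [mul_zero]
        simp only [hterm]
        rw [fin_sum_single 4 (by omega) _ (fun k hk => if_neg hk), if_pos rfl]
      · rw [if_neg h2, if_neg h5]
        have hterm : ∀ k : Fin n, m0 x i.1 k.1 * e0 k.1 j.1 = 0 := by
          intro k
          rw [e0_right0 h2 h5, mul_zero]
        simp only [hterm, Finset.sum_const_zero]
  have hT2 : ∑ k : Fin n, e0 i.1 k.1 * B0 n x k.1 j.1
      = (if i.1 = 1 then -(B0 n x 2 j.1) else if i.1 = 4 then -(SBval n x j.1) else 0) := by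
    by_cases h1 : i.1 = 1
    · rw [if_pos h1]
      have hterm : ∀ k : Fin n, e0 i.1 k.1 * B0 n x k.1 j.1
          = if k.1 = 2 then -(B0 n x 2 j.1) else 0 := by
        intro k
        rw [e0_left1 h1]
        split_ifs with h
        · rw [h]; ring
        · rw [zero_mul]
      simp only [hterm]
      rw [fin_sum_single 2 (by omega) _ (fun k hk => if_neg hk), if_pos rfl]
    · by_cases h4 : i.1 = 4
      · rw [if_neg h1, if_pos h4]
        have hterm : ∀ k : Fin n, e0 i.1 k.1 * B0 n x k.1 j.1
            = -(if 5 ≤ k.1 then B0 n x k.1 j.1 else 0) := by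
          intro k
          rw [e0_left4 h4]
          split_ifs with h
          · ring
          · rw [zero_mul, neg_zero]
        simp only [hterm]
        rw [Finset.sum_neg_distrib, neg_inj]
        rw [Fin.sum_univ_eq_sum_range (fun m => if 5 ≤ m then B0 n x m j.1 else 0) n]
        exact sumB n hn x j.1 hj
      · rw [if_neg h1, if_neg h4]
        have hterm : ∀ k : Fin n, e0 i.1 k.1 * B0 n x k.1 j.1 = 0 := by
          intro k
          rw [e0_left0 h1 h4, zero_mul]
        simp only [hterm, Finset.sum_const_zero]
  rw [hT1, hT2]
  exact entry n hn x i.1 j.1 hi hj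

lemma detPm (n : ℕ) : (Pm n).det = 1 := by
  have ht : (Pm n).BlockTriangular id := by
    intro i j hij
    have hv : j.1 < i.1 := hij
    show p0 i.1 j.1 = 0
    unfold p0 e0
    rw [if_neg (by omega), if_neg (by omega)]
  rw [Matrix.det_of_upperTriangular ht]
  have h1 : ∀ i : Fin n, Pm n i i = 1 := by
    intro i; show p0 i.1 i.1 = 1; unfold p0; rw [if_pos rfl]
  simp [h1]

def repP (n : ℕ) (i : Fin n) : Prop := i.1 = 0 ∨ i.1 = 1 ∨ i.1 = 3 ∨ i.1 = 4

instance (n : ℕ) : DecidablePred (repP n) := fun i => by unfold repP; infer_instance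

noncomputable def Qm (n : ℕ) (x : ℝ) : Matrix (Fin 4) (Fin 4) ℝ :=
  !![x, 1, 1, -1;
     2, x + 1, -2, -2;
     1, -1, x, 1;
     -((n : ℝ) - 4), -((n : ℝ) - 4), (n : ℝ) - 4, x - (n : ℝ) + 5]

lemma detQm (n : ℕ) (x : ℝ) :
    (Qm n x).det
      = (x + 1) * (x ^ 3 + (5 - (n : ℝ)) * x ^ 2 + (11 - 4 * (n : ℝ)) * x + 13 * (n : ℝ) - 57) := by
  simp [Qm, Matrix.det_succ_row_zero, Fin.sum_univ_succ, Fin.succAbove]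
  ring

def repEquiv (n : ℕ) (hn : 5 ≤ n) : Fin 4 ≃ {i : Fin n // repP n i} where
  toFun k :=
    match k with
    | 0 => ⟨⟨0, by omega⟩, Or.inl rfl⟩
    | 1 => ⟨⟨1, by omega⟩, Or.inr (Or.inl rfl)⟩
    | 2 => ⟨⟨3, by omega⟩, Or.inr (Or.inr (Or.inl rfl))⟩
    | 3 => ⟨⟨4, by omega⟩, Or.inr (Or.inr (Or.inr rfl))⟩
  invFun s := if s.1.1 = 0 then 0 else if s.1.1 = 1 then 1 else if s.1.1 = 3 then 2 else 3
  left_inv k := by fin_cases k <;> rfl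
  right_inv s := by
    obtain ⟨i, h⟩ := s
    rcases h with h | h | h | h <;>
      simp only [h] <;> exact Subtype.ext (Fin.ext (by simp [h]))

lemma prodg (n : ℕ) (hn : 5 ≤ n) (x : ℝ) :
    ∏ m ∈ Finset.range n, g x m = (x - 1) * (x + 1) ^ (n - 5) := by
  induction n, hn using Nat.le_induction with
  | base => norm_num [Finset.prod_range_succ, g]
  | succ n hn ih =>
      rw [Finset.prod_range_succ, ih]
      have hg : g x n = x + 1 := by
        unfold g
        rw [if_neg (by omega), if_neg (by omega)]
      rw [hg, show n + 1 - 5 = (n - 5) + 1 from by omega, pow_succ]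
      ring

lemma detBm (n : ℕ) (hn : 5 ≤ n) (x : ℝ) :
    (Bm n x).det
      = ((x + 1) * (x ^ 3 + (5 - (n : ℝ)) * x ^ 2 + (11 - 4 * (n : ℝ)) * x + 13 * (n : ℝ) - 57))
        * ((x - 1) * (x + 1) ^ (n - 5)) := by
  have hzero : ∀ i, repP n i → ∀ j, ¬ repP n j → Bm n x i j = 0 := by
    intro i hi j hj
    show B0 n x i.1 j.1 = 0
    simp only [repP] at hi hj
    by_cases h2 : j.1 = 2
    · rw [h2, B0_b2 (by omega)]
    · rw [B0_ge5 (by omega), if_neg (by omega)]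
  rw [Matrix.twoBlockTriangular_det' (Bm n x) (repP n) hzero]
  have hQ : (toSquareBlockProp (Bm n x) (repP n)).det = (Qm n x).det := by
    rw [← Matrix.det_submatrix_equiv_self (repEquiv n hn)]
    congr 1
    ext k l
    fin_cases k <;> fin_cases l <;>
      norm_num [toSquareBlockProp, Bm, repEquiv, Qm, B0]
  have hD : (toSquareBlockProp (Bm n x) (fun i => ¬ repP n i)).det
      = (x - 1) * (x + 1) ^ (n - 5) := by
    have ht : BlockTriangular (toSquareBlockProp (Bm n x) (fun i => ¬ repP n i)) id := by
      intro s t hst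
      have hv : (t : Fin n).1 < (s : Fin n).1 := hst
      show B0 n x (s : Fin n).1 (t : Fin n).1 = 0
      have hs := s.2
      have htm := t.2
      simp only [repP] at hs htm
      by_cases h2 : (t : Fin n).1 = 2
      · rw [h2, B0_b2 (by omega)]
      · rw [B0_ge5 (by omega), if_neg (by omega)]
    rw [Matrix.det_of_upperTriangular ht]
    have hdiag : ∀ s : {i : Fin n // ¬ repP n i},
        (toSquareBlockProp (Bm n x) (fun i => ¬ repP n i)) s s = g x (s : Fin n).1 := by
      intro s
      have hs := s.2
      simp only [repP] at hs
      show B0 n x (s : Fin n).1 (s : Fin n).1 = _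
      unfold g
      by_cases h2 : (s : Fin n).1 = 2
      · rw [h2]
        rw [if_neg (by omega), if_pos rfl]
        unfold B0
        norm_num
      · rw [B0_ge5 (by omega), if_pos rfl, if_neg (by omega), if_neg h2]
    rw [Finset.prod_congr rfl (fun s _ => hdiag s)]
    have hsub := Finset.prod_subtype (p := fun i : Fin n => ¬ repP n i)
      (F := Subtype.fintype _)
      (Finset.univ.filter (fun i : Fin n => ¬ repP n i))
      (fun i => by simp) (fun i : Fin n => g x i.1)
    rw [← hsub, Finset.prod_filter]
    have hgg : ∀ i : Fin n, (if ¬ repP n i then g x i.1 else 1) = g x i.1 := by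
      intro i
      by_cases h : repP n i
      · rw [if_neg (by simpa using h)]
        unfold g
        rw [if_pos (by simpa [repP] using h)]
      · rw [if_pos h]
    rw [Finset.prod_congr rfl (fun i _ => hgg i)]
    rw [Fin.prod_univ_eq_prod_range (fun m => g x m) n]
    exact prodg n hn x
  rw [hQ, hD, detQm]

end Stmt10Aux

set_option maxHeartbeats 1600000 in
open Stmt10Aux in
/-- for `n ≥ 5`,
`det(λI − A(K_n,H₁(0,n−4)⁻)) = (λ+1)^{n−4} (λ−1) (λ³ + (5−n)λ² + (11−4n)λ + 13n − 57)`. -/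
theorem stmt10 (n : ℕ) (hn : 5 ≤ n) (x : ℝ) :
    (x • (1 : Matrix (Fin n) (Fin n) ℝ) - signMat n (H1edge 0 (n - 4))).det =
      (x + 1) ^ (n - 4) * (x - 1) *
        (x ^ 3 + (5 - (n : ℝ)) * x ^ 2 + (11 - 4 * (n : ℝ)) * x + 13 * (n : ℝ) - 57) := by
  have hM : x • (1 : Matrix (Fin n) (Fin n) ℝ) - signMat n (H1edge 0 (n - 4)) = Mm n x := by
    ext i j
    have hi : i.1 < n := i.2
    have hj : j.1 < n := j.2
    rw [Matrix.sub_apply, Matrix.smul_apply, smul_eq_mul]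
    by_cases h : i = j
    · subst h
      show x * (1 : Matrix (Fin n) (Fin n) ℝ) i i - signMat n _ i i = m0 x i.1 i.1
      unfold signMat m0
      rw [Matrix.one_apply_eq, Matrix.of_apply, if_pos rfl, if_pos rfl]
      ring
    · have hv : i.1 ≠ j.1 := fun hh => h (Fin.ext hh)
      have hiff : H1edge 0 (n - 4) (i.1 + 1) (j.1 + 1) ↔
          ((i.1 < 3 ∧ j.1 < 3) ∨ (i.1 = 0 ∧ j.1 = 3) ∨ (i.1 = 3 ∧ j.1 = 0) ∨
            (i.1 = 3 ∧ 4 ≤ j.1) ∨ (j.1 = 3 ∧ 4 ≤ i.1)) := by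
        simp only [H1edge, adjPair]
        omega
      show x * (1 : Matrix (Fin n) (Fin n) ℝ) i j - signMat n _ i j = m0 x i.1 j.1
      unfold signMat m0
      rw [Matrix.one_apply_ne h, Matrix.of_apply, if_neg h, if_neg hv]
      by_cases hE : H1edge 0 (n - 4) (i.1 + 1) (j.1 + 1)
      · rw [if_pos hE, if_pos (hiff.mp hE)]
        ring
      · rw [if_neg hE, if_neg (fun hc => hE (hiff.mpr hc))]
        ring
  rw [hM]
  have h1 : (Mm n x).det = (Bm n x).det := by
    have h2 := congrArg Matrix.det (mulMP n hn x)
    rw [Matrix.det_mul, Matrix.det_mul, detPm, mul_one, one_mul] at h2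
    exact h2
  rw [h1, detBm n hn x, show n - 4 = (n - 5) + 1 from by omega, pow_succ]
  ring
end

section
/- For every integer n ≥ 9, λ1(A(K_n,H_1(1,n−5)^−)) < λ1(A(K_n,H_1(0,n−4)^−)). -/
open Matrix

/-! ### generic helpers -/

section SpecHelpers

variable {n : ℕ} {A : Matrix (Fin n) (Fin n) ℝ}

lemma stmt11_eigen_le_lam1 (hA : A.IsHermitian) (i : Fin n) : hA.eigenvalues i ≤ lam1 A := by
  apply le_csSup (Matrix.finite_real_spectrum (A := A)).bddAbove
  exact hA.eigenvalues_mem_spectrum_real i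

lemma stmt11_lam1_exists_eigen (hn : 0 < n) (hA : A.IsHermitian) :
    ∃ i : Fin n, hA.eigenvalues i = lam1 A := by
  have hne : (spectrum ℝ A).Nonempty := by
    rw [hA.spectrum_real_eq_range_eigenvalues]
    exact Set.range_nonempty_iff_nonempty.mpr ⟨⟨0, hn⟩⟩
  have h2 : lam1 A ∈ spectrum ℝ A := hne.csSup_mem (Matrix.finite_real_spectrum (A := A))
  rw [hA.spectrum_real_eq_range_eigenvalues] at h2
  exact Set.mem_range.mp h2

lemma stmt11_exists_top_eigenvector (hn : 0 < n) (hA : A.IsHermitian) :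
    ∃ v : Fin n → ℝ, v ≠ 0 ∧ A *ᵥ v = lam1 A • v := by
  obtain ⟨i, hi⟩ := stmt11_lam1_exists_eigen hn hA
  refine ⟨⇑(hA.eigenvectorBasis i), ?_, ?_⟩
  · intro h
    have h1 : ‖hA.eigenvectorBasis i‖ = 1 := hA.eigenvectorBasis.orthonormal.1 i
    have : hA.eigenvectorBasis i = 0 := by ext j; exact congrFun h j
    rw [this, norm_zero] at h1; norm_num at h1
  · rw [hA.mulVec_eigenvectorBasis, hi]

lemma stmt11_rayleigh_le_lam1 (hA : A.IsHermitian) (x : Fin n → ℝ) :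
    x ⬝ᵥ (A *ᵥ x) ≤ lam1 A * (x ⬝ᵥ x) := by
  classical
  have hU2 := hA.eigenvectorUnitary.2
  set U : Matrix (Fin n) (Fin n) ℝ := (hA.eigenvectorUnitary : Matrix (Fin n) (Fin n) ℝ) with hU
  have hstar : star U = Uᵀ := by
    rw [Matrix.star_eq_conjTranspose, Matrix.conjTranspose_eq_transpose_of_trivial]
  have hUU : U * Uᵀ = 1 := by
    rw [← hstar]; exact (Matrix.mem_unitaryGroup_iff).mp hU2
  have hxx : x ⬝ᵥ x = (x ᵥ* U) ⬝ᵥ (x ᵥ* U) := by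
    conv_rhs => rw [← Matrix.dotProduct_mulVec, ← Matrix.mulVec_transpose,
      Matrix.mulVec_mulVec, hUU, Matrix.one_mulVec]
  have hAx : x ⬝ᵥ (A *ᵥ x) = ∑ j, hA.eigenvalues j * ((x ᵥ* U) j * (x ᵥ* U) j) := by
    conv_lhs => rw [hA.spectral_theorem, Unitary.conjStarAlgAut_apply]
    rw [← hU, mul_assoc, ← Matrix.mulVec_mulVec, Matrix.dotProduct_mulVec,
      ← Matrix.mulVec_mulVec, hstar, Matrix.mulVec_transpose, Matrix.dotProduct_mulVec]
    have hdiag : (x ᵥ* U) ᵥ* diagonal (RCLike.ofReal ∘ hA.eigenvalues) =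
        fun j => hA.eigenvalues j * (x ᵥ* U) j := by
      funext j
      rw [Matrix.vecMul_diagonal]
      simp [mul_comm]
    rw [hdiag]
    simp [dotProduct, mul_assoc]
  rw [hAx, hxx]
  have h2 : (x ᵥ* U) ⬝ᵥ (x ᵥ* U) = ∑ j, (x ᵥ* U) j * (x ᵥ* U) j := rfl
  rw [h2, Finset.mul_sum]
  exact Finset.sum_le_sum fun j _ =>
    mul_le_mul_of_nonneg_right (stmt11_eigen_le_lam1 hA j) (mul_self_nonneg _)

end SpecHelpers

section SumHelpers

lemma stmt11_sum_pair {n : ℕ} {f : Fin n → ℝ} {p q : Fin n} (hpq : p ≠ q)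
    (h : ∀ j, j ≠ p → j ≠ q → f j = 0) : ∑ j, f j = f p + f q := by
  rw [← Finset.sum_pair hpq]
  symm
  apply Finset.sum_subset (Finset.subset_univ _)
  intro j _ hj
  simp only [Finset.mem_insert, Finset.mem_singleton, not_or] at hj
  exact h j hj.1 hj.2

lemma stmt11_sum_triple {n : ℕ} {f : Fin n → ℝ} {p q r : Fin n}
    (hpq : p ≠ q) (hpr : p ≠ r) (hqr : q ≠ r)
    (h : ∀ j, j ≠ p → j ≠ q → j ≠ r → f j = 0) : ∑ j, f j = f p + f q + f r := by
  have h2 : ({p, q, r} : Finset (Fin n)).sum f = f p + f q + f r := by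
    rw [Finset.sum_insert (by simp [hpq, hpr]), Finset.sum_pair hqr, add_assoc]
  rw [← h2]
  symm
  apply Finset.sum_subset (Finset.subset_univ _)
  intro j _ hj
  simp only [Finset.mem_insert, Finset.mem_singleton, not_or] at hj
  exact h j hj.1 hj.2.1 hj.2.2

lemma stmt11_sum_tail {n : ℕ} (hn : 9 ≤ n) (f : Fin n → ℝ) (ce : ℝ)
    (htail : ∀ j : Fin n, 5 ≤ (j : ℕ) → f j = ce) :
    ∑ j, f j = f ⟨0, by omega⟩ + f ⟨1, by omega⟩ + f ⟨2, by omega⟩ + f ⟨3, by omega⟩ +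
      f ⟨4, by omega⟩ + (n - 5 : ℕ) * ce := by
  classical
  set F : ℕ → ℝ := fun k => if h : k < n then f ⟨k, h⟩ else 0 with hF
  have h1 : ∑ j, f j = ∑ j : Fin n, F (j : ℕ) := by
    apply Finset.sum_congr rfl
    intro j _
    rw [hF]
    simp [j.isLt]
  rw [h1, Fin.sum_univ_eq_sum_range]
  have h2 : Finset.range n = Finset.Ico 0 n := by rw [Finset.range_eq_Ico]
  rw [h2, ← Finset.sum_Ico_consecutive F (by omega : 0 ≤ 5) (by omega : 5 ≤ n)]
  have h3 : Finset.Ico 0 5 = Finset.range 5 := by rw [Finset.range_eq_Ico]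
  have h4 : ∑ k ∈ Finset.Ico 5 n, F k = (n - 5 : ℕ) * ce := by
    rw [Finset.sum_congr rfl (fun k hk => ?_), Finset.sum_const, Nat.card_Ico, nsmul_eq_mul]
    rw [Finset.mem_Ico] at hk
    rw [hF]
    simp only [dif_pos hk.2]
    exact htail _ hk.1
  rw [h3, h4]
  have h5 : ∑ k ∈ Finset.range 5, F k = F 0 + F 1 + F 2 + F 3 + F 4 := by
    simp [Finset.sum_range_succ]
  rw [h5, hF]
  simp only [dif_pos (by omega : (0:ℕ) < n), dif_pos (by omega : (1:ℕ) < n),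
    dif_pos (by omega : (2:ℕ) < n), dif_pos (by omega : (3:ℕ) < n),
    dif_pos (by omega : (4:ℕ) < n)]

end SumHelpers

section SignMatHelpers

variable {n : ℕ} {E : ℕ → ℕ → Prop}

lemma stmt11_signMat_diag (i : Fin n) : signMat n E i i = 0 := by
  simp [signMat]

lemma stmt11_signMat_edge {i j : Fin n} (h : i ≠ j) (hE : E ((i : ℕ) + 1) ((j : ℕ) + 1)) :
    signMat n E i j = -1 := by
  classical
  simp only [signMat, Matrix.of_apply]
  rw [if_neg h, if_pos hE]

lemma stmt11_signMat_nonedge {i j : Fin n} (h : i ≠ j) (hE : ¬ E ((i : ℕ) + 1) ((j : ℕ) + 1)) :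
    signMat n E i j = 1 := by
  classical
  simp only [signMat, Matrix.of_apply]
  rw [if_neg h, if_neg hE]

lemma stmt11_signMat_isHermitian (hsym : ∀ a b, E a b ↔ E b a) : (signMat n E).IsHermitian := by
  rw [Matrix.IsHermitian, Matrix.conjTranspose_eq_transpose_of_trivial]
  ext i j
  rw [Matrix.transpose_apply]
  by_cases hij : i = j
  · rw [hij]
  · by_cases hE : E ((i : ℕ) + 1) ((j : ℕ) + 1)
    · rw [stmt11_signMat_edge (Ne.symm hij) ((hsym _ _).mp hE), stmt11_signMat_edge hij hE]
    · rw [stmt11_signMat_nonedge (Ne.symm hij) (fun h => hE ((hsym _ _).mpr h)),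
        stmt11_signMat_nonedge hij hE]

end SignMatHelpers

lemma stmt11_H1edge_symm_imp {s t i j : ℕ} (h : H1edge s t i j) : H1edge s t j i := by
  unfold H1edge adjPair at h ⊢
  rcases h with (h|h)|h|h|h|h|h|h|h
  · exact Or.inl (Or.inr ⟨h.2, h.1⟩)
  · exact Or.inl (Or.inl ⟨h.2, h.1⟩)
  · rcases h with h|h
    · exact Or.inr (Or.inl (Or.inr ⟨h.2, h.1⟩))
    · exact Or.inr (Or.inl (Or.inl ⟨h.2, h.1⟩))
  · rcases h with h|h
    · exact Or.inr (Or.inr (Or.inl (Or.inr ⟨h.2, h.1⟩)))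
    · exact Or.inr (Or.inr (Or.inl (Or.inl ⟨h.2, h.1⟩)))
  · rcases h with h|h
    · exact Or.inr (Or.inr (Or.inr (Or.inl (Or.inr ⟨h.2, h.1⟩))))
    · exact Or.inr (Or.inr (Or.inr (Or.inl (Or.inl ⟨h.2, h.1⟩))))
  · exact Or.inr (Or.inr (Or.inr (Or.inr (Or.inr (Or.inl h)))))
  · exact Or.inr (Or.inr (Or.inr (Or.inr (Or.inl h))))
  · exact Or.inr (Or.inr (Or.inr (Or.inr (Or.inr (Or.inr (Or.inr h))))))
  · exact Or.inr (Or.inr (Or.inr (Or.inr (Or.inr (Or.inr (Or.inl h))))))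

lemma stmt11_H1_herm (s t n : ℕ) : (signMat n (H1edge s t)).IsHermitian :=
  stmt11_signMat_isHermitian (fun _ _ => ⟨stmt11_H1edge_symm_imp, stmt11_H1edge_symm_imp⟩)

/-! ### edge characterizations -/

section EdgeChar

variable {n : ℕ}

-- graph A = H1(1, n-5): triangle 123, pendant 5 at 1, edge 14, pendants 6..n at 4
lemma stmt11_cA0 (hn : 9 ≤ n) {j : ℕ} (hj : j < n) :
    H1edge 1 (n-5) (0+1) (j+1) ↔ (j = 1 ∨ j = 2 ∨ j = 3 ∨ j = 4) := by
  unfold H1edge adjPair; omega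

lemma stmt11_cA1 (hn : 9 ≤ n) {j : ℕ} (hj : j < n) :
    H1edge 1 (n-5) (1+1) (j+1) ↔ (j = 0 ∨ j = 2) := by
  unfold H1edge adjPair; omega

lemma stmt11_cA2 (hn : 9 ≤ n) {j : ℕ} (hj : j < n) :
    H1edge 1 (n-5) (2+1) (j+1) ↔ (j = 0 ∨ j = 1) := by
  unfold H1edge adjPair; omega

lemma stmt11_cA3 (hn : 9 ≤ n) {j : ℕ} (hj : j < n) :
    H1edge 1 (n-5) (3+1) (j+1) ↔ (j = 0 ∨ 5 ≤ j) := by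
  unfold H1edge adjPair; omega

lemma stmt11_cA4 (hn : 9 ≤ n) {j : ℕ} (hj : j < n) :
    H1edge 1 (n-5) (4+1) (j+1) ↔ j = 0 := by
  unfold H1edge adjPair; omega

lemma stmt11_cAq (hn : 9 ≤ n) {q j : ℕ} (hq : 5 ≤ q) (hqn : q < n) (hj : j < n) :
    H1edge 1 (n-5) (q+1) (j+1) ↔ j = 3 := by
  unfold H1edge adjPair; omega

-- graph B = H1(0, n-4): triangle 123, edge 14, pendants 5..n at 4
lemma stmt11_cB0 (hn : 9 ≤ n) {j : ℕ} (hj : j < n) :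
    H1edge 0 (n-4) (0+1) (j+1) ↔ (j = 1 ∨ j = 2 ∨ j = 3) := by
  unfold H1edge adjPair; omega

lemma stmt11_cB1 (hn : 9 ≤ n) {j : ℕ} (hj : j < n) :
    H1edge 0 (n-4) (1+1) (j+1) ↔ (j = 0 ∨ j = 2) := by
  unfold H1edge adjPair; omega

lemma stmt11_cB2 (hn : 9 ≤ n) {j : ℕ} (hj : j < n) :
    H1edge 0 (n-4) (2+1) (j+1) ↔ (j = 0 ∨ j = 1) := by
  unfold H1edge adjPair; omega

lemma stmt11_cB3 (hn : 9 ≤ n) {j : ℕ} (hj : j < n) :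
    H1edge 0 (n-4) (3+1) (j+1) ↔ (j = 0 ∨ 4 ≤ j) := by
  unfold H1edge adjPair; omega

lemma stmt11_cBq (hn : 9 ≤ n) {q j : ℕ} (hq : 4 ≤ q) (hqn : q < n) (hj : j < n) :
    H1edge 0 (n-4) (q+1) (j+1) ↔ j = 3 := by
  unfold H1edge adjPair; omega

end EdgeChar

/-! ### eigenvector class constancy -/

section Constancy

variable {n : ℕ}

lemma stmt11_vconst12 (hn : 9 ≤ n) {v : Fin n → ℝ} {μ : ℝ} (hμ : μ ≠ 1)
    (hv : signMat n (H1edge 1 (n-5)) *ᵥ v = μ • v) :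
    v ⟨2, by omega⟩ = v ⟨1, by omega⟩ := by
  set M := signMat n (H1edge 1 (n-5)) with hM
  set i1 : Fin n := ⟨1, by omega⟩
  set i2 : Fin n := ⟨2, by omega⟩
  have hne : i1 ≠ i2 := Fin.ne_of_val_ne (by norm_num)
  have hsum : (M *ᵥ v) i1 - (M *ᵥ v) i2 = v i1 - v i2 := by
    have e1 : (M *ᵥ v) i1 = ∑ j, M i1 j * v j := rfl
    have e2 : (M *ᵥ v) i2 = ∑ j, M i2 j * v j := rfl
    rw [e1, e2, ← Finset.sum_sub_distrib]
    rw [stmt11_sum_pair hne (f := fun j => M i1 j * v j - M i2 j * v j) ?_]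
    · have m11 : M i1 i1 = 0 := stmt11_signMat_diag i1
      have m22 : M i2 i2 = 0 := stmt11_signMat_diag i2
      have m12 : M i1 i2 = -1 := stmt11_signMat_edge hne
        (by show H1edge 1 (n-5) (1+1) (2+1); exact (stmt11_cA1 hn (by omega)).mpr (by omega))
      have m21 : M i2 i1 = -1 := stmt11_signMat_edge hne.symm
        (by show H1edge 1 (n-5) (2+1) (1+1); exact (stmt11_cA2 hn (by omega)).mpr (by omega))
      rw [m11, m22, m12, m21]; ring
    · intro j hj1 hj2
      have hv1 : (j : ℕ) ≠ 1 := fun h => hj1 (Fin.ext h)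
      have hv2 : (j : ℕ) ≠ 2 := fun h => hj2 (Fin.ext h)
      have hrow : M i1 j = M i2 j := by
        rw [hM]
        by_cases hE : H1edge 1 (n-5) (1+1) ((j:ℕ)+1)
        · have hE2 : H1edge 1 (n-5) (2+1) ((j:ℕ)+1) := by
            have h0 : (j:ℕ) = 0 := by
              have := (stmt11_cA1 hn j.isLt).mp hE; omega
            exact (stmt11_cA2 hn j.isLt).mpr (by omega)
          rw [stmt11_signMat_edge hj1.symm hE, stmt11_signMat_edge hj2.symm hE2]
        · have hE2 : ¬ H1edge 1 (n-5) (2+1) ((j:ℕ)+1) := by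
            intro h
            have := (stmt11_cA2 hn j.isLt).mp h
            exact hE ((stmt11_cA1 hn j.isLt).mpr (by omega))
          rw [stmt11_signMat_nonedge hj1.symm hE, stmt11_signMat_nonedge hj2.symm hE2]
      simp only [hrow, sub_self]
  have h1 : (M *ᵥ v) i1 = μ * v i1 := by rw [hv]; simp
  have h2 : (M *ᵥ v) i2 = μ * v i2 := by rw [hv]; simp
  have h3 : (μ - 1) * (v i1 - v i2) = 0 := by
    rw [h1, h2] at hsum; linear_combination hsum
  rcases mul_eq_zero.mp h3 with h | h
  · exact absurd (by linarith : μ = 1) hμ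
  · have := sub_eq_zero.mp h; linarith

lemma stmt11_vconstQ (hn : 9 ≤ n) {v : Fin n → ℝ} {μ : ℝ} (hμ : μ ≠ -1)
    (hv : signMat n (H1edge 1 (n-5)) *ᵥ v = μ • v) :
    ∀ q : Fin n, 5 ≤ (q : ℕ) → v q = v ⟨5, by omega⟩ := by
  intro q hq
  set M := signMat n (H1edge 1 (n-5)) with hM
  set i5 : Fin n := ⟨5, by omega⟩
  by_cases hq5 : q = i5
  · rw [hq5]
  have hne : i5 ≠ q := fun h => hq5 h.symm
  have hv5 : (5 : ℕ) ≠ (q : ℕ) := fun h => hne (Fin.ext h)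
  have hsum : (M *ᵥ v) i5 - (M *ᵥ v) q = -(v i5 - v q) := by
    have e1 : (M *ᵥ v) i5 = ∑ j, M i5 j * v j := rfl
    have e2 : (M *ᵥ v) q = ∑ j, M q j * v j := rfl
    rw [e1, e2, ← Finset.sum_sub_distrib]
    rw [stmt11_sum_pair hne (f := fun j => M i5 j * v j - M q j * v j) ?_]
    · have m55 : M i5 i5 = 0 := stmt11_signMat_diag i5
      have mqq : M q q = 0 := stmt11_signMat_diag q
      have m5q : M i5 q = 1 := stmt11_signMat_nonedge hne
        (by show ¬ H1edge 1 (n-5) (5+1) ((q:ℕ)+1)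
            intro h
            have := (stmt11_cAq hn (by omega) (by omega) q.isLt).mp h
            omega)
      have mq5 : M q i5 = 1 := stmt11_signMat_nonedge hne.symm
        (by show ¬ H1edge 1 (n-5) ((q:ℕ)+1) (5+1)
            intro h
            have := (stmt11_cAq hn hq q.isLt (by omega)).mp h
            omega)
      rw [m55, mqq, m5q, mq5]; ring
    · intro j hj5 hjq
      have hrow : M i5 j = M q j := by
        rw [hM]
        by_cases h3 : (j : ℕ) = 3
        · have hE1 : H1edge 1 (n-5) (5+1) ((j:ℕ)+1) :=
            (stmt11_cAq hn (by omega) (by omega) j.isLt).mpr h3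
          have hE2 : H1edge 1 (n-5) ((q:ℕ)+1) ((j:ℕ)+1) :=
            (stmt11_cAq hn hq q.isLt j.isLt).mpr h3
          rw [stmt11_signMat_edge hj5.symm hE1, stmt11_signMat_edge hjq.symm hE2]
        · have hE1 : ¬ H1edge 1 (n-5) (5+1) ((j:ℕ)+1) := fun h =>
            h3 ((stmt11_cAq hn (by omega) (by omega) j.isLt).mp h)
          have hE2 : ¬ H1edge 1 (n-5) ((q:ℕ)+1) ((j:ℕ)+1) := fun h =>
            h3 ((stmt11_cAq hn hq q.isLt j.isLt).mp h)
          rw [stmt11_signMat_nonedge hj5.symm hE1, stmt11_signMat_nonedge hjq.symm hE2]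
      simp only [hrow, sub_self]
  have h1 : (M *ᵥ v) i5 = μ * v i5 := by rw [hv]; simp
  have h2 : (M *ᵥ v) q = μ * v q := by rw [hv]; simp
  have h3 : (μ + 1) * (v i5 - v q) = 0 := by
    rw [h1, h2] at hsum; linear_combination hsum
  rcases mul_eq_zero.mp h3 with h | h
  · exact absurd (by linarith : μ = -1) hμ
  · have := sub_eq_zero.mp h; linarith

end Constancy

/-! ### row sums for the eigen-equations -/

section Rows

variable {n : ℕ}

lemma stmt11_row0 (hn : 9 ≤ n) {v : Fin n → ℝ}
    (he : ∀ q : Fin n, 5 ≤ (q : ℕ) → v q = v ⟨5, by omega⟩) :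
    (signMat n (H1edge 1 (n-5)) *ᵥ v) ⟨0, by omega⟩ =
      -v ⟨1, by omega⟩ - v ⟨2, by omega⟩ - v ⟨3, by omega⟩ - v ⟨4, by omega⟩
        + ((n - 5 : ℕ) : ℝ) * v ⟨5, by omega⟩ := by
  set M := signMat n (H1edge 1 (n-5)) with hM
  set i0 : Fin n := ⟨0, by omega⟩
  set i1 : Fin n := ⟨1, by omega⟩
  set i2 : Fin n := ⟨2, by omega⟩
  set i3 : Fin n := ⟨3, by omega⟩
  set i4 : Fin n := ⟨4, by omega⟩
  set i5 : Fin n := ⟨5, by omega⟩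
  have e0 : (M *ᵥ v) i0 = ∑ j, M i0 j * v j := rfl
  have htail : ∀ j : Fin n, 5 ≤ (j : ℕ) → M i0 j * v j = v i5 := by
    intro j hj
    have h1 : M i0 j = 1 := stmt11_signMat_nonedge
      (Fin.ne_of_val_ne (show (0:ℕ) ≠ (j:ℕ) by omega))
      (by show ¬ H1edge 1 (n-5) (0+1) ((j:ℕ)+1)
          intro h; have := (stmt11_cA0 hn j.isLt).mp h; omega)
    rw [h1, one_mul]; exact he j hj
  have hs := stmt11_sum_tail hn (fun j => M i0 j * v j) (v i5) htail
  rw [e0, hs]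
  have m00 : M i0 i0 = 0 := stmt11_signMat_diag i0
  have m01 : M i0 i1 = -1 := stmt11_signMat_edge (Fin.ne_of_val_ne (by norm_num))
    (by show H1edge 1 (n-5) (0+1) (1+1); exact (stmt11_cA0 hn (by omega)).mpr (by omega))
  have m02 : M i0 i2 = -1 := stmt11_signMat_edge (Fin.ne_of_val_ne (by norm_num))
    (by show H1edge 1 (n-5) (0+1) (2+1); exact (stmt11_cA0 hn (by omega)).mpr (by omega))
  have m03 : M i0 i3 = -1 := stmt11_signMat_edge (Fin.ne_of_val_ne (by norm_num))
    (by show H1edge 1 (n-5) (0+1) (3+1); exact (stmt11_cA0 hn (by omega)).mpr (by omega))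
  have m04 : M i0 i4 = -1 := stmt11_signMat_edge (Fin.ne_of_val_ne (by norm_num))
    (by show H1edge 1 (n-5) (0+1) (4+1); exact (stmt11_cA0 hn (by omega)).mpr (by omega))
  rw [m00, m01, m02, m03, m04]
  ring

lemma stmt11_row1 (hn : 9 ≤ n) {v : Fin n → ℝ}
    (he : ∀ q : Fin n, 5 ≤ (q : ℕ) → v q = v ⟨5, by omega⟩) :
    (signMat n (H1edge 1 (n-5)) *ᵥ v) ⟨1, by omega⟩ =
      -v ⟨0, by omega⟩ - v ⟨2, by omega⟩ + v ⟨3, by omega⟩ + v ⟨4, by omega⟩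
        + ((n - 5 : ℕ) : ℝ) * v ⟨5, by omega⟩ := by
  set M := signMat n (H1edge 1 (n-5)) with hM
  set i0 : Fin n := ⟨0, by omega⟩
  set i1 : Fin n := ⟨1, by omega⟩
  set i2 : Fin n := ⟨2, by omega⟩
  set i3 : Fin n := ⟨3, by omega⟩
  set i4 : Fin n := ⟨4, by omega⟩
  set i5 : Fin n := ⟨5, by omega⟩
  have e0 : (M *ᵥ v) i1 = ∑ j, M i1 j * v j := rfl
  have htail : ∀ j : Fin n, 5 ≤ (j : ℕ) → M i1 j * v j = v i5 := by
    intro j hj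
    have h1 : M i1 j = 1 := stmt11_signMat_nonedge
      (Fin.ne_of_val_ne (show (1:ℕ) ≠ (j:ℕ) by omega))
      (by show ¬ H1edge 1 (n-5) (1+1) ((j:ℕ)+1)
          intro h; have := (stmt11_cA1 hn j.isLt).mp h; omega)
    rw [h1, one_mul]; exact he j hj
  have hs := stmt11_sum_tail hn (fun j => M i1 j * v j) (v i5) htail
  rw [e0, hs]
  have m11 : M i1 i1 = 0 := stmt11_signMat_diag i1
  have m10 : M i1 i0 = -1 := stmt11_signMat_edge (Fin.ne_of_val_ne (by norm_num))
    (by show H1edge 1 (n-5) (1+1) (0+1); exact (stmt11_cA1 hn (by omega)).mpr (by omega))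
  have m12 : M i1 i2 = -1 := stmt11_signMat_edge (Fin.ne_of_val_ne (by norm_num))
    (by show H1edge 1 (n-5) (1+1) (2+1); exact (stmt11_cA1 hn (by omega)).mpr (by omega))
  have m13 : M i1 i3 = 1 := stmt11_signMat_nonedge (Fin.ne_of_val_ne (by norm_num))
    (by show ¬ H1edge 1 (n-5) (1+1) (3+1)
        intro h; have := (stmt11_cA1 hn (by omega : (3:ℕ) < n)).mp h; omega)
  have m14 : M i1 i4 = 1 := stmt11_signMat_nonedge (Fin.ne_of_val_ne (by norm_num))
    (by show ¬ H1edge 1 (n-5) (1+1) (4+1)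
        intro h; have := (stmt11_cA1 hn (by omega : (4:ℕ) < n)).mp h; omega)
  rw [m10, m11, m12, m13, m14]
  ring

lemma stmt11_row3 (hn : 9 ≤ n) {v : Fin n → ℝ}
    (he : ∀ q : Fin n, 5 ≤ (q : ℕ) → v q = v ⟨5, by omega⟩) :
    (signMat n (H1edge 1 (n-5)) *ᵥ v) ⟨3, by omega⟩ =
      -v ⟨0, by omega⟩ + v ⟨1, by omega⟩ + v ⟨2, by omega⟩ + v ⟨4, by omega⟩
        - ((n - 5 : ℕ) : ℝ) * v ⟨5, by omega⟩ := by
  set M := signMat n (H1edge 1 (n-5)) with hM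
  set i0 : Fin n := ⟨0, by omega⟩
  set i1 : Fin n := ⟨1, by omega⟩
  set i2 : Fin n := ⟨2, by omega⟩
  set i3 : Fin n := ⟨3, by omega⟩
  set i4 : Fin n := ⟨4, by omega⟩
  set i5 : Fin n := ⟨5, by omega⟩
  have e0 : (M *ᵥ v) i3 = ∑ j, M i3 j * v j := rfl
  have htail : ∀ j : Fin n, 5 ≤ (j : ℕ) → M i3 j * v j = -v i5 := by
    intro j hj
    have h1 : M i3 j = -1 := stmt11_signMat_edge
      (Fin.ne_of_val_ne (show (3:ℕ) ≠ (j:ℕ) by omega))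
      (by show H1edge 1 (n-5) (3+1) ((j:ℕ)+1)
          exact (stmt11_cA3 hn j.isLt).mpr (by omega))
    rw [h1, he j hj]; ring
  have hs := stmt11_sum_tail hn (fun j => M i3 j * v j) (-v i5) htail
  rw [e0, hs]
  have m33 : M i3 i3 = 0 := stmt11_signMat_diag i3
  have m30 : M i3 i0 = -1 := stmt11_signMat_edge (Fin.ne_of_val_ne (by norm_num))
    (by show H1edge 1 (n-5) (3+1) (0+1); exact (stmt11_cA3 hn (by omega)).mpr (by omega))
  have m31 : M i3 i1 = 1 := stmt11_signMat_nonedge (Fin.ne_of_val_ne (by norm_num))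
    (by show ¬ H1edge 1 (n-5) (3+1) (1+1)
        intro h; have := (stmt11_cA3 hn (by omega : (1:ℕ) < n)).mp h; omega)
  have m32 : M i3 i2 = 1 := stmt11_signMat_nonedge (Fin.ne_of_val_ne (by norm_num))
    (by show ¬ H1edge 1 (n-5) (3+1) (2+1)
        intro h; have := (stmt11_cA3 hn (by omega : (2:ℕ) < n)).mp h; omega)
  have m34 : M i3 i4 = 1 := stmt11_signMat_nonedge (Fin.ne_of_val_ne (by norm_num))
    (by show ¬ H1edge 1 (n-5) (3+1) (4+1)
        intro h; have := (stmt11_cA3 hn (by omega : (4:ℕ) < n)).mp h; omega)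
  rw [m30, m31, m32, m33, m34]
  ring

lemma stmt11_row4 (hn : 9 ≤ n) {v : Fin n → ℝ}
    (he : ∀ q : Fin n, 5 ≤ (q : ℕ) → v q = v ⟨5, by omega⟩) :
    (signMat n (H1edge 1 (n-5)) *ᵥ v) ⟨4, by omega⟩ =
      -v ⟨0, by omega⟩ + v ⟨1, by omega⟩ + v ⟨2, by omega⟩ + v ⟨3, by omega⟩
        + ((n - 5 : ℕ) : ℝ) * v ⟨5, by omega⟩ := by
  set M := signMat n (H1edge 1 (n-5)) with hM
  set i0 : Fin n := ⟨0, by omega⟩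
  set i1 : Fin n := ⟨1, by omega⟩
  set i2 : Fin n := ⟨2, by omega⟩
  set i3 : Fin n := ⟨3, by omega⟩
  set i4 : Fin n := ⟨4, by omega⟩
  set i5 : Fin n := ⟨5, by omega⟩
  have e0 : (M *ᵥ v) i4 = ∑ j, M i4 j * v j := rfl
  have htail : ∀ j : Fin n, 5 ≤ (j : ℕ) → M i4 j * v j = v i5 := by
    intro j hj
    have h1 : M i4 j = 1 := stmt11_signMat_nonedge
      (Fin.ne_of_val_ne (show (4:ℕ) ≠ (j:ℕ) by omega))
      (by show ¬ H1edge 1 (n-5) (4+1) ((j:ℕ)+1)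
          intro h; have := (stmt11_cA4 hn j.isLt).mp h; omega)
    rw [h1, one_mul]; exact he j hj
  have hs := stmt11_sum_tail hn (fun j => M i4 j * v j) (v i5) htail
  rw [e0, hs]
  have m44 : M i4 i4 = 0 := stmt11_signMat_diag i4
  have m40 : M i4 i0 = -1 := stmt11_signMat_edge (Fin.ne_of_val_ne (by norm_num))
    (by show H1edge 1 (n-5) (4+1) (0+1); exact (stmt11_cA4 hn (by omega)).mpr (by omega))
  have m41 : M i4 i1 = 1 := stmt11_signMat_nonedge (Fin.ne_of_val_ne (by norm_num))
    (by show ¬ H1edge 1 (n-5) (4+1) (1+1)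
        intro h; have := (stmt11_cA4 hn (by omega : (1:ℕ) < n)).mp h; omega)
  have m42 : M i4 i2 = 1 := stmt11_signMat_nonedge (Fin.ne_of_val_ne (by norm_num))
    (by show ¬ H1edge 1 (n-5) (4+1) (2+1)
        intro h; have := (stmt11_cA4 hn (by omega : (2:ℕ) < n)).mp h; omega)
  have m43 : M i4 i3 = 1 := stmt11_signMat_nonedge (Fin.ne_of_val_ne (by norm_num))
    (by show ¬ H1edge 1 (n-5) (4+1) (3+1)
        intro h; have := (stmt11_cA4 hn (by omega : (3:ℕ) < n)).mp h; omega)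
  rw [m40, m41, m42, m43, m44]
  ring

lemma stmt11_row5 (hn : 9 ≤ n) {v : Fin n → ℝ}
    (he : ∀ q : Fin n, 5 ≤ (q : ℕ) → v q = v ⟨5, by omega⟩) :
    (signMat n (H1edge 1 (n-5)) *ᵥ v) ⟨5, by omega⟩ =
      v ⟨0, by omega⟩ + v ⟨1, by omega⟩ + v ⟨2, by omega⟩ - v ⟨3, by omega⟩ + v ⟨4, by omega⟩
        + ((n - 5 : ℕ) : ℝ) * v ⟨5, by omega⟩ - v ⟨5, by omega⟩ := by
  classical
  set M := signMat n (H1edge 1 (n-5)) with hM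
  set i0 : Fin n := ⟨0, by omega⟩
  set i1 : Fin n := ⟨1, by omega⟩
  set i2 : Fin n := ⟨2, by omega⟩
  set i3 : Fin n := ⟨3, by omega⟩
  set i4 : Fin n := ⟨4, by omega⟩
  set i5 : Fin n := ⟨5, by omega⟩
  have e0 : (M *ᵥ v) i5 = ∑ j, M i5 j * v j := rfl
  set g : Fin n → ℝ := fun j => if j = i5 then v i5 else M i5 j * v j with hg
  have hpt : ∀ j, M i5 j * v j = g j - (if j = i5 then v i5 else 0) := by
    intro j
    have hd : M i5 i5 = 0 := stmt11_signMat_diag i5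
    by_cases h : j = i5
    · rw [hg]; simp only [if_pos h, h, hd]; ring
    · simp [hg, h]
  have hsplit : ∑ j, M i5 j * v j = (∑ j, g j) - v i5 := by
    rw [Finset.sum_congr rfl (fun j _ => hpt j), Finset.sum_sub_distrib]
    congr 1
    simp
  have htail : ∀ j : Fin n, 5 ≤ (j : ℕ) → g j = v i5 := by
    intro j hj
    by_cases h : j = i5
    · simp [hg, h]
    · have h1 : M i5 j = 1 := stmt11_signMat_nonedge
        (fun hh => h hh.symm)
        (by show ¬ H1edge 1 (n-5) (5+1) ((j:ℕ)+1)
            intro hh; have := (stmt11_cAq hn (le_refl 5) (by omega) j.isLt).mp hh; omega)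
      rw [hg]
      simp only [if_neg h]
      rw [h1, one_mul]; exact he j hj
  have hs := stmt11_sum_tail hn g (v i5) htail
  have hne : ∀ (k : ℕ) (h : k < n), k ≠ 5 → (⟨k, h⟩ : Fin n) ≠ i5 :=
    fun k h hk => Fin.ne_of_val_ne hk
  have g0 : g i0 = v i0 := by
    rw [hg]; simp only [if_neg (show i0 ≠ i5 from hne 0 (by omega) (by norm_num))]
    have m50 : M i5 i0 = 1 := stmt11_signMat_nonedge (Fin.ne_of_val_ne (by norm_num))
      (by show ¬ H1edge 1 (n-5) (5+1) (0+1)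
          intro h; have := (stmt11_cAq hn (le_refl 5) (by omega) (by omega : (0:ℕ) < n)).mp h
          omega)
    rw [m50, one_mul]
  have g1 : g i1 = v i1 := by
    rw [hg]; simp only [if_neg (show i1 ≠ i5 from hne 1 (by omega) (by norm_num))]
    have m51 : M i5 i1 = 1 := stmt11_signMat_nonedge (Fin.ne_of_val_ne (by norm_num))
      (by show ¬ H1edge 1 (n-5) (5+1) (1+1)
          intro h; have := (stmt11_cAq hn (le_refl 5) (by omega) (by omega : (1:ℕ) < n)).mp h
          omega)
    rw [m51, one_mul]
  have g2 : g i2 = v i2 := by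
    rw [hg]; simp only [if_neg (show i2 ≠ i5 from hne 2 (by omega) (by norm_num))]
    have m52 : M i5 i2 = 1 := stmt11_signMat_nonedge (Fin.ne_of_val_ne (by norm_num))
      (by show ¬ H1edge 1 (n-5) (5+1) (2+1)
          intro h; have := (stmt11_cAq hn (le_refl 5) (by omega) (by omega : (2:ℕ) < n)).mp h
          omega)
    rw [m52, one_mul]
  have g3 : g i3 = -v i3 := by
    rw [hg]; simp only [if_neg (show i3 ≠ i5 from hne 3 (by omega) (by norm_num))]
    have m53 : M i5 i3 = -1 := stmt11_signMat_edge (Fin.ne_of_val_ne (by norm_num))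
      (by show H1edge 1 (n-5) (5+1) (3+1)
          exact (stmt11_cAq hn (le_refl 5) (by omega) (by omega : (3:ℕ) < n)).mpr rfl)
    rw [m53]; ring
  have g4 : g i4 = v i4 := by
    rw [hg]; simp only [if_neg (show i4 ≠ i5 from hne 4 (by omega) (by norm_num))]
    have m54 : M i5 i4 = 1 := stmt11_signMat_nonedge (Fin.ne_of_val_ne (by norm_num))
      (by show ¬ H1edge 1 (n-5) (5+1) (4+1)
          intro h; have := (stmt11_cAq hn (le_refl 5) (by omega) (by omega : (4:ℕ) < n)).mp h
          omega)
    rw [m54, one_mul]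
  rw [e0, hsplit, hs, g0, g1, g2, g3, g4]
  ring

end Rows

/-! ### difference of quadratic forms between the two graphs -/

section Delta

variable {n : ℕ}

lemma stmt11_delta (hn : 9 ≤ n) (v : Fin n → ℝ) :
    v ⬝ᵥ (signMat n (H1edge 0 (n-4)) *ᵥ v) = v ⬝ᵥ (signMat n (H1edge 1 (n-5)) *ᵥ v)
      + 4 * (v ⟨4, by omega⟩ * (v ⟨0, by omega⟩ - v ⟨3, by omega⟩)) := by
  classical
  set MA := signMat n (H1edge 1 (n-5)) with hMA
  set MB := signMat n (H1edge 0 (n-4)) with hMB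
  set i0 : Fin n := ⟨0, by omega⟩
  set i3 : Fin n := ⟨3, by omega⟩
  set i4 : Fin n := ⟨4, by omega⟩
  -- entry equality away from the changed pairs
  have hsame : ∀ i j : Fin n, i ≠ j → ¬(i = i0 ∧ j = i4) → ¬(i = i3 ∧ j = i4) →
      ¬(i = i4 ∧ j = i0) → ¬(i = i4 ∧ j = i3) → MB i j = MA i j := by
    intro i j hij h04 h34 h40 h43
    have hvij : (i : ℕ) ≠ (j : ℕ) := Fin.val_ne_of_ne hij
    have hiff : (H1edge 0 (n-4) ((i:ℕ)+1) ((j:ℕ)+1) ↔ H1edge 1 (n-5) ((i:ℕ)+1) ((j:ℕ)+1)) := by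
      have hI := i.isLt; have hJ := j.isLt
      have hv04 : ¬((i:ℕ) = 0 ∧ (j:ℕ) = 4) := fun ⟨h1, h2⟩ => h04 ⟨Fin.ext h1, Fin.ext h2⟩
      have hv34 : ¬((i:ℕ) = 3 ∧ (j:ℕ) = 4) := fun ⟨h1, h2⟩ => h34 ⟨Fin.ext h1, Fin.ext h2⟩
      have hv40 : ¬((i:ℕ) = 4 ∧ (j:ℕ) = 0) := fun ⟨h1, h2⟩ => h40 ⟨Fin.ext h1, Fin.ext h2⟩
      have hv43 : ¬((i:ℕ) = 4 ∧ (j:ℕ) = 3) := fun ⟨h1, h2⟩ => h43 ⟨Fin.ext h1, Fin.ext h2⟩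
      rcases Nat.lt_or_ge (i : ℕ) 5 with hi5 | hi5
      · have : (i:ℕ) = 0 ∨ (i:ℕ) = 1 ∨ (i:ℕ) = 2 ∨ (i:ℕ) = 3 ∨ (i:ℕ) = 4 := by omega
        rcases this with h | h | h | h | h <;> rw [show ((i:ℕ)+1) = (((i:ℕ))+1) from rfl, h]
        · rw [stmt11_cB0 hn hJ, stmt11_cA0 hn hJ]; omega
        · rw [stmt11_cB1 hn hJ, stmt11_cA1 hn hJ]
        · rw [stmt11_cB2 hn hJ, stmt11_cA2 hn hJ]
        · rw [stmt11_cB3 hn hJ, stmt11_cA3 hn hJ]; omega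
        · rw [stmt11_cBq hn (by omega) (by omega) hJ, stmt11_cA4 hn hJ]; omega
      · rw [stmt11_cBq hn (by omega) (by omega) hJ, stmt11_cAq hn (by omega) (by omega) hJ]
    by_cases hE : H1edge 1 (n-5) ((i:ℕ)+1) ((j:ℕ)+1)
    · rw [hMA, hMB, stmt11_signMat_edge hij (hiff.mpr hE), stmt11_signMat_edge hij hE]
    · rw [hMA, hMB, stmt11_signMat_nonedge hij (fun h => hE (hiff.mp h)),
        stmt11_signMat_nonedge hij hE]
  -- the four changed entries
  have hb04 : MB i0 i4 = 1 := stmt11_signMat_nonedge (Fin.ne_of_val_ne (by norm_num))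
    (by show ¬ H1edge 0 (n-4) (0+1) (4+1)
        intro h; have := (stmt11_cB0 hn (by omega : (4:ℕ) < n)).mp h; omega)
  have ha04 : MA i0 i4 = -1 := stmt11_signMat_edge (Fin.ne_of_val_ne (by norm_num))
    (by show H1edge 1 (n-5) (0+1) (4+1); exact (stmt11_cA0 hn (by omega)).mpr (by omega))
  have hb34 : MB i3 i4 = -1 := stmt11_signMat_edge (Fin.ne_of_val_ne (by norm_num))
    (by show H1edge 0 (n-4) (3+1) (4+1); exact (stmt11_cB3 hn (by omega)).mpr (by omega))
  have ha34 : MA i3 i4 = 1 := stmt11_signMat_nonedge (Fin.ne_of_val_ne (by norm_num))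
    (by show ¬ H1edge 1 (n-5) (3+1) (4+1)
        intro h; have := (stmt11_cA3 hn (by omega : (4:ℕ) < n)).mp h; omega)
  have hb40 : MB i4 i0 = 1 := stmt11_signMat_nonedge (Fin.ne_of_val_ne (by norm_num))
    (by show ¬ H1edge 0 (n-4) (4+1) (0+1)
        intro h; have := (stmt11_cBq hn (by omega) (by omega) (by omega : (0:ℕ) < n)).mp h; omega)
  have ha40 : MA i4 i0 = -1 := stmt11_signMat_edge (Fin.ne_of_val_ne (by norm_num))
    (by show H1edge 1 (n-5) (4+1) (0+1); exact (stmt11_cA4 hn (by omega)).mpr rfl)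
  have hb43 : MB i4 i3 = -1 := stmt11_signMat_edge (Fin.ne_of_val_ne (by norm_num))
    (by show H1edge 0 (n-4) (4+1) (3+1)
        exact (stmt11_cBq hn (by omega) (by omega) (by omega : (3:ℕ) < n)).mpr rfl)
  have ha43 : MA i4 i3 = 1 := stmt11_signMat_nonedge (Fin.ne_of_val_ne (by norm_num))
    (by show ¬ H1edge 1 (n-5) (4+1) (3+1)
        intro h; have := (stmt11_cA4 hn (by omega : (3:ℕ) < n)).mp h; omega)
  have ne03 : i0 ≠ i3 := Fin.ne_of_val_ne (by norm_num)
  have ne04 : i0 ≠ i4 := Fin.ne_of_val_ne (by norm_num)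
  have ne34 : i3 ≠ i4 := Fin.ne_of_val_ne (by norm_num)
  have hdB : ∀ i : Fin n, MB i i = 0 := fun i => stmt11_signMat_diag i
  have hdA : ∀ i : Fin n, MA i i = 0 := fun i => stmt11_signMat_diag i
  have hterm0 : ∀ i j : Fin n, ¬(i = i0 ∧ j = i4) → ¬(i = i3 ∧ j = i4) →
      ¬(i = i4 ∧ j = i0) → ¬(i = i4 ∧ j = i3) → MB i j * v j - MA i j * v j = 0 := by
    intro i j h1 h2 h3 h4
    by_cases hij : i = j
    · rw [hij, hdB, hdA]; ring
    · rw [hsame i j hij h1 h2 h3 h4]; ring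
  have hw : ∀ i : Fin n, (MB *ᵥ v) i - (MA *ᵥ v) i =
      (if i = i0 then 2 * v i4 else if i = i3 then -2 * v i4 else
        if i = i4 then 2 * v i0 - 2 * v i3 else 0) := by
    intro i
    have ediff : (MB *ᵥ v) i - (MA *ᵥ v) i = ∑ j, (MB i j * v j - MA i j * v j) := by
      rw [Finset.sum_sub_distrib]; rfl
    by_cases h0 : i = i0
    · rw [ediff, if_pos h0, h0, Finset.sum_eq_single i4 ?_ (by simp)]
      · rw [hb04, ha04]; ring
      · intro j _ hj
        exact hterm0 i0 j (fun hh => hj hh.2) (fun hh => ne03 hh.1)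
          (fun hh => ne04 hh.1) (fun hh => ne04 hh.1)
    · rw [if_neg h0]
      by_cases h3 : i = i3
      · rw [ediff, if_pos h3, h3, Finset.sum_eq_single i4 ?_ (by simp)]
        · rw [hb34, ha34]; ring
        · intro j _ hj
          exact hterm0 i3 j (fun hh => ne03 hh.1.symm) (fun hh => hj hh.2)
            (fun hh => ne34 hh.1) (fun hh => ne34 hh.1)
      · rw [if_neg h3]
        by_cases h4 : i = i4
        · rw [ediff, if_pos h4, h4,
            stmt11_sum_pair ne03 (f := fun j => MB i4 j * v j - MA i4 j * v j) ?_]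
          · rw [hb40, ha40, hb43, ha43]; ring
          · intro j hj0 hj3
            exact hterm0 i4 j (fun hh => ne04 hh.1.symm) (fun hh => ne34 hh.1.symm)
              (fun hh => hj0 hh.2) (fun hh => hj3 hh.2)
        · rw [if_neg h4, ediff, Finset.sum_eq_zero]
          intro j _
          exact hterm0 i j (fun hh => h0 hh.1) (fun hh => h3 hh.1)
            (fun hh => h4 hh.1) (fun hh => h4 hh.1)
  have key : v ⬝ᵥ (MB *ᵥ v) - v ⬝ᵥ (MA *ᵥ v) = ∑ i, v i * ((MB *ᵥ v) i - (MA *ᵥ v) i) := by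
    rw [Finset.sum_congr rfl (fun i (_ : i ∈ Finset.univ) => mul_sub (v i) _ _),
      Finset.sum_sub_distrib]
    rfl
  have key2 : ∑ i, v i * ((MB *ᵥ v) i - (MA *ᵥ v) i) =
      v i0 * (2 * v i4) + v i3 * (-2 * v i4) + v i4 * (2 * v i0 - 2 * v i3) := by
    rw [Finset.sum_congr rfl (fun i (_ : i ∈ Finset.univ) => by rw [hw i])]
    rw [stmt11_sum_triple ne03 ne04 ne34 ?_]
    · rw [if_pos rfl, if_neg ne03.symm, if_pos rfl, if_neg ne04.symm, if_neg ne34.symm,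
        if_pos rfl]
    · intro j hj0 hj3 hj4
      rw [if_neg hj0, if_neg hj3, if_neg hj4, mul_zero]
  have := key.trans key2
  linarith [this]

end Delta

/-! ### lower bound for the top eigenvalue -/

section LowerBound

variable {n : ℕ}

lemma stmt11_mu_lb (hn : 9 ≤ n) : (13/3 : ℝ) ≤ lam1 (signMat n (H1edge 1 (n-5))) := by
  classical
  set M := signMat n (H1edge 1 (n-5)) with hM
  set L := lam1 M with hL
  set T : ℝ := ((n - 5 : ℕ) : ℝ) with hT
  have hT4 : (4 : ℝ) ≤ T := by
    rw [hT]; exact_mod_cast (by omega : (4:ℕ) ≤ n - 5)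
  set i0 : Fin n := ⟨0, by omega⟩
  set i1 : Fin n := ⟨1, by omega⟩
  set i2 : Fin n := ⟨2, by omega⟩
  set i3 : Fin n := ⟨3, by omega⟩
  set i4 : Fin n := ⟨4, by omega⟩
  set x : Fin n → ℝ := fun j => if ((j:ℕ) = 1 ∨ (j:ℕ) = 2 ∨ 5 ≤ (j:ℕ)) then 1 else 0 with hx
  have x0 : x i0 = 0 := by rw [hx]; norm_num
  have x1 : x i1 = 1 := by rw [hx]; norm_num
  have x2 : x i2 = 1 := by rw [hx]; norm_num
  have x3 : x i3 = 0 := by rw [hx]; norm_num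
  have x4 : x i4 = 0 := by rw [hx]; norm_num
  have xq : ∀ j : Fin n, 5 ≤ (j:ℕ) → x j = 1 := by
    intro j hj; rw [hx]; simp only [if_pos (Or.inr (Or.inr hj))]
  -- row sums
  have hMx1 : (M *ᵥ x) i1 = T - 1 := by
    have e0 : (M *ᵥ x) i1 = ∑ j, M i1 j * x j := rfl
    have htail : ∀ j : Fin n, 5 ≤ (j : ℕ) → M i1 j * x j = 1 := by
      intro j hj
      have h1 : M i1 j = 1 := stmt11_signMat_nonedge
        (Fin.ne_of_val_ne (show (1:ℕ) ≠ (j:ℕ) by omega))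
        (by show ¬ H1edge 1 (n-5) (1+1) ((j:ℕ)+1)
            intro h; have := (stmt11_cA1 hn j.isLt).mp h; omega)
      rw [h1, one_mul, xq j hj]
    have hs := stmt11_sum_tail hn (fun j => M i1 j * x j) 1 htail
    have m11 : M i1 i1 = 0 := stmt11_signMat_diag i1
    have m12 : M i1 i2 = -1 := stmt11_signMat_edge (Fin.ne_of_val_ne (by norm_num))
      (by show H1edge 1 (n-5) (1+1) (2+1); exact (stmt11_cA1 hn (by omega)).mpr (by omega))
    rw [e0, hs]
    rw [m11, m12, x0, x1, x2, x3, x4]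
    rw [hT]; ring
  have hMx2 : (M *ᵥ x) i2 = T - 1 := by
    have e0 : (M *ᵥ x) i2 = ∑ j, M i2 j * x j := rfl
    have htail : ∀ j : Fin n, 5 ≤ (j : ℕ) → M i2 j * x j = 1 := by
      intro j hj
      have h1 : M i2 j = 1 := stmt11_signMat_nonedge
        (Fin.ne_of_val_ne (show (2:ℕ) ≠ (j:ℕ) by omega))
        (by show ¬ H1edge 1 (n-5) (2+1) ((j:ℕ)+1)
            intro h; have := (stmt11_cA2 hn j.isLt).mp h; omega)
      rw [h1, one_mul, xq j hj]
    have hs := stmt11_sum_tail hn (fun j => M i2 j * x j) 1 htail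
    have m22 : M i2 i2 = 0 := stmt11_signMat_diag i2
    have m21 : M i2 i1 = -1 := stmt11_signMat_edge (Fin.ne_of_val_ne (by norm_num))
      (by show H1edge 1 (n-5) (2+1) (1+1); exact (stmt11_cA2 hn (by omega)).mpr (by omega))
    rw [e0, hs]
    rw [m22, m21, x0, x1, x2, x3, x4]
    rw [hT]; ring
  have hMxq : ∀ q : Fin n, 5 ≤ (q:ℕ) → (M *ᵥ x) q = T + 1 := by
    intro q hq
    have e0 : (M *ᵥ x) q = ∑ j, M q j * x j := rfl
    set g : Fin n → ℝ := fun j => if j = q then 1 else M q j * x j with hg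
    have hdq : M q q = 0 := stmt11_signMat_diag q
    have hpt : ∀ j, M q j * x j = g j - (if j = q then 1 else 0) := by
      intro j
      by_cases h : j = q
      · rw [hg]; simp only [if_pos h, h, hdq]; ring
      · simp [hg, h]
    have hsplit : ∑ j, M q j * x j = (∑ j, g j) - 1 := by
      rw [Finset.sum_congr rfl (fun j _ => hpt j), Finset.sum_sub_distrib]
      congr 1
      simp
    have htail : ∀ j : Fin n, 5 ≤ (j : ℕ) → g j = 1 := by
      intro j hj
      by_cases h : j = q
      · simp [hg, h]
      · have h1 : M q j = 1 := stmt11_signMat_nonedge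
          (fun hh => h (Fin.ext (Fin.val_eq_of_eq hh)).symm)
          (by show ¬ H1edge 1 (n-5) ((q:ℕ)+1) ((j:ℕ)+1)
              intro hh; have := (stmt11_cAq hn hq q.isLt j.isLt).mp hh; omega)
        rw [hg]; simp only [if_neg h]; rw [h1, one_mul, xq j hj]
    have hs := stmt11_sum_tail hn g 1 htail
    have hqne : ∀ (k : ℕ) (h : k < n), k < 5 → (⟨k, h⟩ : Fin n) ≠ q :=
      fun k h hk => Fin.ne_of_val_ne (show k ≠ (q:ℕ) by omega)
    have g0 : g i0 = 0 := by
      rw [hg]; simp only [if_neg (show i0 ≠ q from hqne 0 (by omega) (by norm_num))]; rw [x0, mul_zero]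
    have g1 : g i1 = 1 := by
      rw [hg]; simp only [if_neg (show i1 ≠ q from hqne 1 (by omega) (by norm_num))]
      have m1 : M q i1 = 1 := stmt11_signMat_nonedge
        (Fin.ne_of_val_ne (show (q:ℕ) ≠ (1:ℕ) by omega))
        (by show ¬ H1edge 1 (n-5) ((q:ℕ)+1) (1+1)
            intro hh; have := (stmt11_cAq hn hq q.isLt (by omega : (1:ℕ) < n)).mp hh; omega)
      rw [m1, one_mul, x1]
    have g2 : g i2 = 1 := by
      rw [hg]; simp only [if_neg (show i2 ≠ q from hqne 2 (by omega) (by norm_num))]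
      have m2 : M q i2 = 1 := stmt11_signMat_nonedge
        (Fin.ne_of_val_ne (show (q:ℕ) ≠ (2:ℕ) by omega))
        (by show ¬ H1edge 1 (n-5) ((q:ℕ)+1) (2+1)
            intro hh; have := (stmt11_cAq hn hq q.isLt (by omega : (2:ℕ) < n)).mp hh; omega)
      rw [m2, one_mul, x2]
    have g3 : g i3 = 0 := by
      rw [hg]; simp only [if_neg (show i3 ≠ q from hqne 3 (by omega) (by norm_num))]; rw [x3, mul_zero]
    have g4 : g i4 = 0 := by
      rw [hg]; simp only [if_neg (show i4 ≠ q from hqne 4 (by omega) (by norm_num))]; rw [x4, mul_zero]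
    rw [e0, hsplit, hs, g0, g1, g2, g3, g4, hT]
    ring
  -- quadratic form and norm
  have hform : x ⬝ᵥ (M *ᵥ x) = 2*(T-1) + T*(T+1) := by
    have e0 : x ⬝ᵥ (M *ᵥ x) = ∑ j, x j * (M *ᵥ x) j := rfl
    have htail : ∀ j : Fin n, 5 ≤ (j : ℕ) → x j * (M *ᵥ x) j = T + 1 := by
      intro j hj; rw [xq j hj, one_mul, hMxq j hj]
    have hs := stmt11_sum_tail hn (fun j => x j * (M *ᵥ x) j) (T+1) htail
    rw [e0, hs]
    rw [x0, x1, x2, x3, x4, hMx1, hMx2]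
    rw [hT]; ring
  have hnorm : x ⬝ᵥ x = T + 2 := by
    have e0 : x ⬝ᵥ x = ∑ j, x j * x j := rfl
    have htail : ∀ j : Fin n, 5 ≤ (j : ℕ) → x j * x j = 1 := by
      intro j hj; rw [xq j hj, one_mul]
    have hs := stmt11_sum_tail hn (fun j => x j * x j) 1 htail
    rw [e0, hs]
    rw [x0, x1, x2, x3, x4]
    rw [hT]; ring
  have hray := stmt11_rayleigh_le_lam1 (stmt11_H1_herm 1 (n-5) n) x
  rw [hform, hnorm, ← hM, ← hL] at hray
  by_contra hcon
  push_neg at hcon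
  have hTpos : (0:ℝ) < T + 2 := by linarith
  have h1 : L * (T + 2) < (13/3) * (T + 2) := by
    exact mul_lt_mul_of_pos_right hcon hTpos
  nlinarith [mul_nonneg (by linarith : (0:ℝ) ≤ T - 4) (by linarith : (0:ℝ) ≤ 3*T + 8)]

end LowerBound


set_option maxHeartbeats 2000000 in
/-- for `n ≥ 9`, `λ₁(A(K_n,H₁(1,n−5)⁻)) < λ₁(A(K_n,H₁(0,n−4)⁻))`. -/
theorem stmt11 (n : ℕ) (hn : 9 ≤ n) :
    lam1 (signMat n (H1edge 1 (n - 5))) < lam1 (signMat n (H1edge 0 (n - 4))) := by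
  classical
  set M := signMat n (H1edge 1 (n - 5)) with hM
  set MB := signMat n (H1edge 0 (n - 4)) with hMB
  set μ := lam1 M with hmu
  have hμ13 : (13/3 : ℝ) ≤ μ := stmt11_mu_lb hn
  obtain ⟨v, hv0, hv⟩ := stmt11_exists_top_eigenvector (by omega : 0 < n)
    (stmt11_H1_herm 1 (n-5) n)
  set i0 : Fin n := ⟨0, by omega⟩
  set i1 : Fin n := ⟨1, by omega⟩
  set i2 : Fin n := ⟨2, by omega⟩
  set i3 : Fin n := ⟨3, by omega⟩
  set i4 : Fin n := ⟨4, by omega⟩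
  set i5 : Fin n := ⟨5, by omega⟩
  have hb : v i2 = v i1 := stmt11_vconst12 hn (by linarith) hv
  have he : ∀ q : Fin n, 5 ≤ (q:ℕ) → v q = v i5 := stmt11_vconstQ hn (by linarith) hv
  set a := v i0 with ha
  set b := v i1 with hbd
  set c := v i3 with hc
  set d := v i4 with hd
  set e := v i5 with hee
  set T : ℝ := ((n - 5 : ℕ) : ℝ) with hT
  have hT4 : (4 : ℝ) ≤ T := by
    rw [hT]; exact_mod_cast (by omega : (4:ℕ) ≤ n - 5)
  -- the five eigen-equations
  have hva : (M *ᵥ v) i0 = μ * a := by rw [hv]; simp; rfl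
  have hvb : (M *ᵥ v) i1 = μ * b := by rw [hv]; simp; rfl
  have hvc : (M *ᵥ v) i3 = μ * c := by rw [hv]; simp; rfl
  have hvd : (M *ᵥ v) i4 = μ * d := by rw [hv]; simp; rfl
  have hve : (M *ᵥ v) i5 = μ * e := by rw [hv]; simp; rfl
  have E1 : μ * a = -2*b - c - d + T*e := by
    have h := stmt11_row0 hn he
    rw [hva, hb] at h; linarith
  have E2 : μ * b = -a - b + c + d + T*e := by
    have h := stmt11_row1 hn he
    rw [hvb, hb] at h; linarith
  have E3 : μ * c = -a + 2*b + d - T*e := by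
    have h := stmt11_row3 hn he
    rw [hvc, hb] at h; linarith
  have E4 : μ * d = -a + 2*b + c + T*e := by
    have h := stmt11_row4 hn he
    rw [hvd, hb] at h; linarith
  have E5 : μ * e = a + 2*b - c + d + T*e - e := by
    have h := stmt11_row5 hn he
    rw [hve, hb] at h; linarith
  -- solved identities
  have Ia : ((μ+1)*(μ-1)*(μ^2-μ-8)) * a = T*e*(μ-1)*(μ^2-2*μ-7) := by
    linear_combination (μ^3 - μ^2 - 5*μ + 5) * E1 + (2 - 2*μ^2) * E2 +
      (3 - 2*μ - μ^2) * E3 + (3 - 2*μ - μ^2) * E4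
  have Ib : ((μ+1)*(μ-1)*(μ^2-μ-8)) * b = T*e*(μ-1)*(μ-3)*(μ+1) := by
    linear_combination (1 - μ^2) * E1 + (μ^3 - 2*μ^2 - μ + 2) * E2 +
      (μ^2 - 1) * E3 + (μ^2 - 1) * E4
  have Ic : ((μ+1)*(μ-1)*(μ^2-μ-8)) * c = -(T*e*(μ-1)*(μ^2-2*μ-7)) := by
    linear_combination (3 - 2*μ - μ^2) * E1 + (2*μ^2 - 2) * E2 +
      (μ^3 - μ^2 - 5*μ + 5) * E3 + (μ^2 + 2*μ - 3) * E4
  have Id : ((μ+1)*(μ-1)*(μ^2-μ-8)) * d = T*e*(μ-1)*(μ-3)*(μ+3) := by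
    linear_combination (3 - 2*μ - μ^2) * E1 + (2*μ^2 - 2) * E2 +
      (μ^2 + 2*μ - 3) * E3 + (μ^3 - μ^2 - 5*μ + 5) * E4
  have hf1 : (0:ℝ) < μ + 1 := by linarith
  have hf2 : (0:ℝ) < μ - 1 := by linarith
  have hf3 : (0:ℝ) < μ^2 - μ - 8 := by nlinarith
  have hf4 : (0:ℝ) < μ - 3 := by linarith
  have hf5 : (0:ℝ) < μ + 3 := by linarith
  have hf6 : (0:ℝ) < μ^2 - 2*μ - 7 := by nlinarith
  have hDpos : (0:ℝ) < (μ+1)*(μ-1)*(μ^2-μ-8) := mul_pos (mul_pos hf1 hf2) hf3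
  have hDne : ((μ+1)*(μ-1)*(μ^2-μ-8)) ≠ 0 := ne_of_gt hDpos
  -- e ≠ 0
  have he0 : e ≠ 0 := by
    intro h0
    have za : a = 0 := by
      have := Ia; rw [h0] at this
      have h2 : ((μ+1)*(μ-1)*(μ^2-μ-8)) * a = 0 := by linarith [this]; 
      exact (mul_eq_zero.mp h2).resolve_left hDne
    have zb : b = 0 := by
      have := Ib; rw [h0] at this
      have h2 : ((μ+1)*(μ-1)*(μ^2-μ-8)) * b = 0 := by linarith [this]
      exact (mul_eq_zero.mp h2).resolve_left hDne
    have zc : c = 0 := by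
      have := Ic; rw [h0] at this
      have h2 : ((μ+1)*(μ-1)*(μ^2-μ-8)) * c = 0 := by linarith [this]
      exact (mul_eq_zero.mp h2).resolve_left hDne
    have zd : d = 0 := by
      have := Id; rw [h0] at this
      have h2 : ((μ+1)*(μ-1)*(μ^2-μ-8)) * d = 0 := by linarith [this]
      exact (mul_eq_zero.mp h2).resolve_left hDne
    apply hv0
    funext j
    rcases Nat.lt_or_ge (j : ℕ) 5 with hj5 | hj5
    · have : (j:ℕ) = 0 ∨ (j:ℕ) = 1 ∨ (j:ℕ) = 2 ∨ (j:ℕ) = 3 ∨ (j:ℕ) = 4 := by omega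
      rcases this with h | h | h | h | h
      · rw [show j = i0 from Fin.ext h]; exact za
      · rw [show j = i1 from Fin.ext h]; exact zb
      · rw [show j = i2 from Fin.ext h]; rw [hb]; exact zb
      · rw [show j = i3 from Fin.ext h]; exact zc
      · rw [show j = i4 from Fin.ext h]; exact zd
    · rw [he j hj5]; exact h0
  have he2 : (0:ℝ) < e^2 := by positivity
  have hT0 : (0:ℝ) < T := by linarith
  -- positivity of d*(a-c)
  have Iac : ((μ+1)*(μ-1)*(μ^2-μ-8)) * (a - c) = 2*T*e*(μ-1)*(μ^2-2*μ-7) := by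
    linear_combination Ia - Ic
  have hprod : (((μ+1)*(μ-1)*(μ^2-μ-8)) * d) * (((μ+1)*(μ-1)*(μ^2-μ-8)) * (a - c)) =
      2*T^2*e^2*((μ-1)^2)*(μ-3)*(μ+3)*(μ^2-2*μ-7) := by
    rw [Id, Iac]; ring
  have hrhs : (0:ℝ) < 2*T^2*e^2*((μ-1)^2)*(μ-3)*(μ+3)*(μ^2-2*μ-7) := by
    have h1 : (0:ℝ) < T^2 := by positivity
    have h2 : (0:ℝ) < (μ-1)^2 := by positivity
    have := mul_pos (mul_pos (mul_pos (mul_pos (mul_pos (mul_pos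
      (by norm_num : (0:ℝ) < 2) h1) he2) h2) hf4) hf5) hf6
    linarith [this]
  have hdac : (0:ℝ) < d * (a - c) := by
    nlinarith [hprod, hrhs, sq_nonneg ((μ+1)*(μ-1)*(μ^2-μ-8))]
  -- final Rayleigh comparison
  have hvv : (0:ℝ) < v ⬝ᵥ v := by
    obtain ⟨i, hi⟩ : ∃ i, v i ≠ 0 := by
      by_contra hxx; push_neg at hxx; exact hv0 (funext hxx)
    have e0 : v ⬝ᵥ v = ∑ j, v j * v j := rfl
    rw [e0]
    exact Finset.sum_pos' (fun j _ => mul_self_nonneg _)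
      ⟨i, Finset.mem_univ i, mul_self_pos.mpr hi⟩
  have hMvv : v ⬝ᵥ (M *ᵥ v) = μ * (v ⬝ᵥ v) := by
    rw [hv, dotProduct_smul, smul_eq_mul]
  have hdelta := stmt11_delta hn v
  have hray := stmt11_rayleigh_le_lam1 (stmt11_H1_herm 0 (n-4) n) v
  have hdelta2 : v ⬝ᵥ (MB *ᵥ v) = v ⬝ᵥ (M *ᵥ v) + 4 * (d * (a - c)) := hdelta
  rw [hdelta2, hMvv] at hray
  by_contra hfin
  push_neg at hfin
  have hle : lam1 MB * (v ⬝ᵥ v) ≤ μ * (v ⬝ᵥ v) :=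
    mul_le_mul_of_nonneg_right hfin hvv.le
  linarith [hray, hle, hdac]
end

section
/- For all integers s, t ≥ 1 with n = s + t + 5, the characteristic polynomial of the 7×7 real matrix Q_4(s,t) satisfies det(λI − Q_4(s,t)) = (λ−1)(λ+1)(λ⁵ + (7−n)λ⁴ − (6n−22)λ³ + (8st + 4n + 8t − 30)λ² + (32st + 22n − 103)λ + 13n − 72st − 40t − 57). -/
open Matrix

private noncomputable def Mb (s t x : ℝ) : Matrix (Fin 7) (Fin 7) ℝ :=
  !![x, 1, 1, 1, -1, -s, -t;
       1, x, 1, -1, -1, -s, -t;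
       1, 1, x, -1, -1, -s, -t;
       1, -1, -1, x, 1, s, -t;
       -1, -1, -1, 1, x, -s, t;
       -1, -1, -1, 1, -1, x - (s - 1), -t;
       -1, -1, -1, -1, 1, -s, x - (t - 1)]

set_option maxRecDepth 8000 in
set_option maxHeartbeats 2000000 in
private lemma mdet0 (s t x : ℝ) :
    (!![x, 1, -1, -1, -s, -t;
       1, x, -1, -1, -s, -t;
       -1, -1, x, 1, s, -t;
       -1, -1, 1, x, -s, t;
       -1, -1, 1, -1, x - (s - 1), -t;
       -1, -1, -1, 1, -s, x - (t - 1)]).det =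
    x^6 - x^5*s - x^5*t + 2*x^5 - 5*x^4*s - 5*x^4*t - 5*x^4 + 8*x^3*s*t + 2*x^3*s + 2*x^3*t - 4*x^3 + 24*x^2*s*t + 10*x^2*s + 10*x^2*t + 7*x^2 - 40*x*s*t - x*s - x*t + 2*x + 8*s*t - 5*s - 5*t - 3 := by
  simp [Matrix.det_succ_row_zero, Fin.sum_univ_succ, Fin.succAbove,
    Fin.castSucc, Fin.castAdd, Fin.castLE]
  simp (config := { decide := true, failIfUnchanged := false }) only [Fin.isValue, Matrix.cons_val_zero,
    Matrix.cons_val_one, Matrix.head_cons, Matrix.cons_val_succ, Fin.succ, Fin.val_zero,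
    Nat.succ_eq_add_one, Matrix.cons_val', Matrix.cons_val_fin_one, Matrix.empty_val',
    reduceIte, Matrix.cons_val_succ', Matrix.cons_val_zero']
  ring

set_option maxRecDepth 8000 in
set_option maxHeartbeats 2000000 in
private lemma mdet1 (s t x : ℝ) :
    (!![1, 1, -1, -1, -s, -t;
       1, x, -1, -1, -s, -t;
       1, -1, x, 1, s, -t;
       -1, -1, 1, x, -s, t;
       -1, -1, 1, -1, x - (s - 1), -t;
       -1, -1, -1, 1, -s, x - (t - 1)]).det =
    x^5 - 2*x^4*s - 2*x^4*t + x^4 - 4*x^3*s - 2*x^3 + 16*x^2*s*t + 4*x^2*t - 2*x^2 + 4*x*s + x - 16*s*t + 2*s - 2*t + 1 := by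
  simp [Matrix.det_succ_row_zero, Fin.sum_univ_succ, Fin.succAbove,
    Fin.castSucc, Fin.castAdd, Fin.castLE]
  simp (config := { decide := true, failIfUnchanged := false }) only [Fin.isValue, Matrix.cons_val_zero,
    Matrix.cons_val_one, Matrix.head_cons, Matrix.cons_val_succ, Fin.succ, Fin.val_zero,
    Nat.succ_eq_add_one, Matrix.cons_val', Matrix.cons_val_fin_one, Matrix.empty_val',
    reduceIte, Matrix.cons_val_succ', Matrix.cons_val_zero']
  ring

set_option maxRecDepth 8000 in
set_option maxHeartbeats 2000000 in
private lemma mdet2 (s t x : ℝ) :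
    (!![1, x, -1, -1, -s, -t;
       1, 1, -1, -1, -s, -t;
       1, -1, x, 1, s, -t;
       -1, -1, 1, x, -s, t;
       -1, -1, 1, -1, x - (s - 1), -t;
       -1, -1, -1, 1, -s, x - (t - 1)]).det =
    -x^5 + 2*x^4*s + 2*x^4*t - x^4 + 4*x^3*s + 2*x^3 - 16*x^2*s*t - 4*x^2*t + 2*x^2 - 4*x*s - x + 16*s*t - 2*s + 2*t - 1 := by
  simp [Matrix.det_succ_row_zero, Fin.sum_univ_succ, Fin.succAbove,
    Fin.castSucc, Fin.castAdd, Fin.castLE]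
  simp (config := { decide := true, failIfUnchanged := false }) only [Fin.isValue, Matrix.cons_val_zero,
    Matrix.cons_val_one, Matrix.head_cons, Matrix.cons_val_succ, Fin.succ, Fin.val_zero,
    Nat.succ_eq_add_one, Matrix.cons_val', Matrix.cons_val_fin_one, Matrix.empty_val',
    reduceIte, Matrix.cons_val_succ', Matrix.cons_val_zero']
  ring

set_option maxRecDepth 8000 in
set_option maxHeartbeats 2000000 in
private lemma mdet3 (s t x : ℝ) :
    (!![1, x, 1, -1, -s, -t;
       1, 1, x, -1, -s, -t;
       1, -1, -1, 1, s, -t;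
       -1, -1, -1, x, -s, t;
       -1, -1, -1, -1, x - (s - 1), -t;
       -1, -1, -1, 1, -s, x - (t - 1)]).det =
    x^5 - 2*x^4*t + 5*x^4 - 8*x^3*s - 8*x^3*t - 2*x^3 - 8*x^2*s + 12*x^2*t - 10*x^2 + 32*x*s*t + 8*x*s + 8*x*t + x - 32*s*t + 8*s - 10*t + 5 := by
  simp [Matrix.det_succ_row_zero, Fin.sum_univ_succ, Fin.succAbove,
    Fin.castSucc, Fin.castAdd, Fin.castLE]
  simp (config := { decide := true, failIfUnchanged := false }) only [Fin.isValue, Matrix.cons_val_zero,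
    Matrix.cons_val_one, Matrix.head_cons, Matrix.cons_val_succ, Fin.succ, Fin.val_zero,
    Nat.succ_eq_add_one, Matrix.cons_val', Matrix.cons_val_fin_one, Matrix.empty_val',
    reduceIte, Matrix.cons_val_succ', Matrix.cons_val_zero']
  ring

set_option maxRecDepth 8000 in
set_option maxHeartbeats 2000000 in
private lemma mdet4 (s t x : ℝ) :
    (!![1, x, 1, -1, -s, -t;
       1, 1, x, -1, -s, -t;
       1, -1, -1, x, s, -t;
       -1, -1, -1, 1, -s, t;
       -1, -1, -1, 1, x - (s - 1), -t;
       -1, -1, -1, -1, -s, x - (t - 1)]).det =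
    x^5 - 2*x^4*t + x^4 - 2*x^3 + 4*x^2*t - 2*x^2 - 32*x*s*t + x + 32*s*t - 2*t + 1 := by
  simp [Matrix.det_succ_row_zero, Fin.sum_univ_succ, Fin.succAbove,
    Fin.castSucc, Fin.castAdd, Fin.castLE]
  simp (config := { decide := true, failIfUnchanged := false }) only [Fin.isValue, Matrix.cons_val_zero,
    Matrix.cons_val_one, Matrix.head_cons, Matrix.cons_val_succ, Fin.succ, Fin.val_zero,
    Nat.succ_eq_add_one, Matrix.cons_val', Matrix.cons_val_fin_one, Matrix.empty_val',
    reduceIte, Matrix.cons_val_succ', Matrix.cons_val_zero']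
  ring

set_option maxRecDepth 8000 in
set_option maxHeartbeats 2000000 in
private lemma mdet5 (s t x : ℝ) :
    (!![1, x, 1, -1, -1, -t;
       1, 1, x, -1, -1, -t;
       1, -1, -1, x, 1, -t;
       -1, -1, -1, 1, x, t;
       -1, -1, -1, 1, -1, -t;
       -1, -1, -1, -1, 1, x - (t - 1)]).det =
    -x^5 - x^4 + 8*x^3*t + 2*x^3 + 8*x^2*t + 2*x^2 - 40*x*t - x + 24*t - 1 := by
  simp [Matrix.det_succ_row_zero, Fin.sum_univ_succ, Fin.succAbove,
    Fin.castSucc, Fin.castAdd, Fin.castLE]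
  simp (config := { decide := true, failIfUnchanged := false }) only [Fin.isValue, Matrix.cons_val_zero,
    Matrix.cons_val_one, Matrix.head_cons, Matrix.cons_val_succ, Fin.succ, Fin.val_zero,
    Nat.succ_eq_add_one, Matrix.cons_val', Matrix.cons_val_fin_one, Matrix.empty_val',
    reduceIte, Matrix.cons_val_succ', Matrix.cons_val_zero']
  ring

set_option maxRecDepth 8000 in
set_option maxHeartbeats 2000000 in
private lemma mdet6 (s t x : ℝ) :
    (!![1, x, 1, -1, -1, -s;
       1, 1, x, -1, -1, -s;
       1, -1, -1, x, 1, s;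
       -1, -1, -1, 1, x, -s;
       -1, -1, -1, 1, -1, x - (s - 1);
       -1, -1, -1, -1, 1, -s]).det =
    x^5 - 3*x^4 - 10*x^3 + 16*x^2*s + 14*x^2 + 9*x - 16*s - 11 := by
  simp [Matrix.det_succ_row_zero, Fin.sum_univ_succ, Fin.succAbove,
    Fin.castSucc, Fin.castAdd, Fin.castLE]
  simp (config := { decide := true, failIfUnchanged := false }) only [Fin.isValue, Matrix.cons_val_zero,
    Matrix.cons_val_one, Matrix.head_cons, Matrix.cons_val_succ, Fin.succ, Fin.val_zero,
    Nat.succ_eq_add_one, Matrix.cons_val', Matrix.cons_val_fin_one, Matrix.empty_val',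
    reduceIte, Matrix.cons_val_succ', Matrix.cons_val_zero']
  ring

set_option maxRecDepth 8000 in
set_option maxHeartbeats 2000000 in
private lemma Mbig_det (s t x : ℝ) :
    (Mb s t x).det =
      (x - 1) * (x + 1) *
        (x ^ 5 + (7 - (s + t + 5)) * x ^ 4 - (6 * (s + t + 5) - 22) * x ^ 3 +
          (8 * s * t + 4 * (s + t + 5) + 8 * t - 30) * x ^ 2 +
          (32 * s * t + 22 * (s + t + 5) - 103) * x +
          13 * (s + t + 5) - 72 * s * t - 40 * t - 57) := by
  rw [Matrix.det_succ_row_zero]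
  simp only [Fin.sum_univ_succ, Fin.sum_univ_zero]
  have h0 : ((Mb s t x).submatrix Fin.succ ((0 : Fin 7).succAbove)) =
      !![x, 1, -1, -1, -s, -t;
       1, x, -1, -1, -s, -t;
       -1, -1, x, 1, s, -t;
       -1, -1, 1, x, -s, t;
       -1, -1, 1, -1, x - (s - 1), -t;
       -1, -1, -1, 1, -s, x - (t - 1)] := by
    ext i k; fin_cases i <;> fin_cases k <;> rfl
  have h1 : ((Mb s t x).submatrix Fin.succ ((Fin.succ (0 : Fin 6)).succAbove)) =
      !![1, 1, -1, -1, -s, -t;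
       1, x, -1, -1, -s, -t;
       1, -1, x, 1, s, -t;
       -1, -1, 1, x, -s, t;
       -1, -1, 1, -1, x - (s - 1), -t;
       -1, -1, -1, 1, -s, x - (t - 1)] := by
    ext i k; fin_cases i <;> fin_cases k <;> rfl
  have h2 : ((Mb s t x).submatrix Fin.succ ((Fin.succ (Fin.succ (0 : Fin 5))).succAbove)) =
      !![1, x, -1, -1, -s, -t;
       1, 1, -1, -1, -s, -t;
       1, -1, x, 1, s, -t;
       -1, -1, 1, x, -s, t;
       -1, -1, 1, -1, x - (s - 1), -t;
       -1, -1, -1, 1, -s, x - (t - 1)] := by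
    ext i k; fin_cases i <;> fin_cases k <;> rfl
  have h3 : ((Mb s t x).submatrix Fin.succ ((Fin.succ (Fin.succ (Fin.succ (0 : Fin 4)))).succAbove)) =
      !![1, x, 1, -1, -s, -t;
       1, 1, x, -1, -s, -t;
       1, -1, -1, 1, s, -t;
       -1, -1, -1, x, -s, t;
       -1, -1, -1, -1, x - (s - 1), -t;
       -1, -1, -1, 1, -s, x - (t - 1)] := by
    ext i k; fin_cases i <;> fin_cases k <;> rfl
  have h4 : ((Mb s t x).submatrix Fin.succ ((Fin.succ (Fin.succ (Fin.succ (Fin.succ (0 : Fin 3))))).succAbove)) =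
      !![1, x, 1, -1, -s, -t;
       1, 1, x, -1, -s, -t;
       1, -1, -1, x, s, -t;
       -1, -1, -1, 1, -s, t;
       -1, -1, -1, 1, x - (s - 1), -t;
       -1, -1, -1, -1, -s, x - (t - 1)] := by
    ext i k; fin_cases i <;> fin_cases k <;> rfl
  have h5 : ((Mb s t x).submatrix Fin.succ ((Fin.succ (Fin.succ (Fin.succ (Fin.succ (Fin.succ (0 : Fin 2)))))).succAbove)) =
      !![1, x, 1, -1, -1, -t;
       1, 1, x, -1, -1, -t;
       1, -1, -1, x, 1, -t;
       -1, -1, -1, 1, x, t;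
       -1, -1, -1, 1, -1, -t;
       -1, -1, -1, -1, 1, x - (t - 1)] := by
    ext i k; fin_cases i <;> fin_cases k <;> rfl
  have h6 : ((Mb s t x).submatrix Fin.succ ((Fin.succ (Fin.succ (Fin.succ (Fin.succ (Fin.succ (Fin.succ (0 : Fin 1))))))).succAbove)) =
      !![1, x, 1, -1, -1, -s;
       1, 1, x, -1, -1, -s;
       1, -1, -1, x, 1, s;
       -1, -1, -1, 1, x, -s;
       -1, -1, -1, 1, -1, x - (s - 1);
       -1, -1, -1, -1, 1, -s] := by
    ext i k; fin_cases i <;> fin_cases k <;> rfl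
  rw [h0, h1, h2, h3, h4, h5, h6,
    mdet0 s t x, mdet1 s t x, mdet2 s t x, mdet3 s t x, mdet4 s t x, mdet5 s t x, mdet6 s t x]
  simp [Mb, Fin.val_succ, pow_succ]
  ring


/-- characteristic polynomial of `Q₄(s,t)` for `s, t ≥ 1`, `n = s + t + 5`. -/
theorem stmt14 (s t n : ℕ) (hs : 1 ≤ s) (ht : 1 ≤ t) (hn : n = s + t + 5) (x : ℝ) :
    (x • (1 : Matrix (Fin 7) (Fin 7) ℝ) - Q4 s t).det =
      (x - 1) * (x + 1) *
        (x ^ 5 + (7 - (n : ℝ)) * x ^ 4 - (6 * (n : ℝ) - 22) * x ^ 3 +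
          (8 * (s : ℝ) * (t : ℝ) + 4 * (n : ℝ) + 8 * (t : ℝ) - 30) * x ^ 2 +
          (32 * (s : ℝ) * (t : ℝ) + 22 * (n : ℝ) - 103) * x +
          13 * (n : ℝ) - 72 * (s : ℝ) * (t : ℝ) - 40 * (t : ℝ) - 57) := by
  subst hn
  push_cast
  have h : x • (1 : Matrix (Fin 7) (Fin 7) ℝ) - Q4 s t = Mb (s : ℝ) (t : ℝ) x := by
    ext i j
    fin_cases i <;> fin_cases j <;>
      norm_num [Q4, Mb, Matrix.one_apply, Matrix.cons_val_succ, Fin.ext_iff]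
  rw [h, Mbig_det]
end

section
/- For all integers s, t ≥ 1 with n = s + t + 5, the largest eigenvalue of the n×n matrix A(K_n,H_2(s,t)^−) equals the largest eigenvalue of the 7×7 matrix Q_4(s,t). -/
open Matrix

section Aux15

/-- The 7x7 sign pattern between the classes of the equitable partition. -/
noncomputable def Pm : Matrix (Fin 7) (Fin 7) ℝ :=
  !![1,-1,-1,-1,1,1,1;
     -1,1,-1,1,1,1,1;
     -1,-1,1,1,1,1,1;
     -1,1,1,1,-1,-1,1;
     1,1,1,-1,1,1,-1;
     1,1,1,-1,1,1,1;
     1,1,1,1,-1,1,1]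

/-- class sizes -/
def msz (s t : ℕ) (d : Fin 7) : ℕ := if d.val ≤ 4 then 1 else if d.val = 5 then s else t

/-- class of a (0-based) vertex index -/
def cls (s : ℕ) (a : ℕ) : Fin 7 :=
  if a = 0 then 0 else if a = 1 then 1 else if a = 2 then 2 else if a = 3 then 3
  else if a = 4 then 4 else if a < s + 5 then 5 else 6

lemma Pm_symm (c d : Fin 7) : Pm c d = Pm d c := by
  fin_cases c <;> fin_cases d <;> rfl

lemma Pm_diag (c : Fin 7) : Pm c c = 1 := by fin_cases c <;> rfl

lemma Q4_eq' (s t : ℕ) (c d : Fin 7) :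
    Q4 s t c d = (msz s t d : ℝ) * Pm c d - (if c = d then 1 else 0) := by
  fin_cases c <;> fin_cases d <;> norm_num [Q4, Pm, msz, Fin.ext_iff]

lemma cls_lt5 {s a : ℕ} (h : a < 5) : cls s a = ⟨a, by omega⟩ := by
  unfold cls
  rcases (by omega : a = 0 ∨ a = 1 ∨ a = 2 ∨ a = 3 ∨ a = 4) with rfl|rfl|rfl|rfl|rfl <;> rfl

lemma cls5 {s a : ℕ} (h1 : 5 ≤ a) (h2 : a < s + 5) : cls s a = 5 := by
  unfold cls
  rw [if_neg (by omega), if_neg (by omega), if_neg (by omega), if_neg (by omega),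
    if_neg (by omega), if_pos h2]

lemma cls6 {s a : ℕ} (h : s + 5 ≤ a) : cls s a = 6 := by
  unfold cls
  rw [if_neg (by omega), if_neg (by omega), if_neg (by omega), if_neg (by omega),
    if_neg (by omega), if_neg (by omega)]

lemma cls_eq_iff_lt5 {s a k : ℕ} (hk : k < 5) : cls s a = ⟨k, by omega⟩ ↔ a = k := by
  unfold cls
  split_ifs <;> simp [Fin.ext_iff] <;> omega

lemma cls_eq_iff5 {s a : ℕ} : cls s a = 5 ↔ 5 ≤ a ∧ a < s + 5 := by
  unfold cls
  split_ifs <;> simp [Fin.ext_iff] <;> omega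

lemma cls_eq_iff6 {s a : ℕ} : cls s a = 6 ↔ s + 5 ≤ a := by
  unfold cls
  split_ifs <;> simp [Fin.ext_iff] <;> omega

set_option maxHeartbeats 1000000 in
/-- the entries of the big matrix only depend on classes (off the diagonal) -/
lemma key15 (s t a b : ℕ) (ha : a < s + t + 5) (hb : b < s + t + 5) (hab : a ≠ b) [Decidable (H2edge s t (a+1) (b+1))] :
    (if H2edge s t (a+1) (b+1) then (-1:ℝ) else 1) = Pm (cls s a) (cls s b) := by
  have hA : a = 0 ∨ a = 1 ∨ a = 2 ∨ a = 3 ∨ a = 4 ∨ (5 ≤ a ∧ a < s+5) ∨ (s+5 ≤ a) := by omega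
  have hB : b = 0 ∨ b = 1 ∨ b = 2 ∨ b = 3 ∨ b = 4 ∨ (5 ≤ b ∧ b < s+5) ∨ (s+5 ≤ b) := by omega
  rcases hA with rfl|rfl|rfl|rfl|rfl|⟨h1,h2⟩|h1 <;>
    rcases hB with rfl|rfl|rfl|rfl|rfl|⟨g1,g2⟩|g1 <;>
    simp (disch := omega) only [cls_lt5, cls5, cls6] <;>
    first
      | (rw [if_pos (by unfold H2edge adjPair; omega)]; rfl)
      | (rw [if_neg (by unfold H2edge adjPair; omega)]; rfl)

end Aux15


section Aux15b

variable (s t : ℕ)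

lemma card_fiber (d : Fin 7) :
    (Finset.univ.filter (fun j : Fin (s+t+5) => cls s j.val = d)).card = msz s t d := by
  rw [Finset.card_filter]
  rw [Fin.sum_univ_eq_sum_range (fun a => if cls s a = d then (1:ℕ) else 0) (s+t+5)]
  rw [← Finset.card_filter]
  have work : ∀ (l u : ℕ), (∀ a, a < s+t+5 → (cls s a = d ↔ l ≤ a ∧ a < u)) → u ≤ s+t+5 →
      ((Finset.range (s+t+5)).filter (fun a => cls s a = d)).card = u - l := by
    intro l u h hu
    rw [show (Finset.range (s+t+5)).filter (fun a => cls s a = d) = Finset.Ico l u by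
      ext a
      simp only [Finset.mem_filter, Finset.mem_range, Finset.mem_Ico]
      constructor
      · rintro ⟨h1, h2⟩; exact (h a h1).1 h2
      · rintro ⟨h1, h2⟩; exact ⟨by omega, (h a (by omega)).2 ⟨h1, h2⟩⟩]
    exact Nat.card_Ico l u
  fin_cases d
  · rw [work 0 1 (fun a ha => by
      rw [cls_eq_iff_lt5 (show (0:ℕ) < 5 by omega)]; omega) (by omega)]
    simp [msz]
  · rw [work 1 2 (fun a ha => by
      rw [cls_eq_iff_lt5 (show (1:ℕ) < 5 by omega)]; omega) (by omega)]
    simp [msz]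
  · rw [work 2 3 (fun a ha => by
      rw [cls_eq_iff_lt5 (show (2:ℕ) < 5 by omega)]; omega) (by omega)]
    simp [msz]
  · rw [work 3 4 (fun a ha => by
      rw [cls_eq_iff_lt5 (show (3:ℕ) < 5 by omega)]; omega) (by omega)]
    simp [msz]
  · rw [work 4 5 (fun a ha => by
      rw [cls_eq_iff_lt5 (show (4:ℕ) < 5 by omega)]; omega) (by omega)]
    simp [msz]
  · rw [work 5 (s+5) (fun a ha => by show cls s a = 5 ↔ _; rw [cls_eq_iff5]) (by omega)]
    simp [msz]
  · rw [work (s+5) (s+t+5) (fun a ha => by show cls s a = 6 ↔ _; rw [cls_eq_iff6]; omega) (by omega)]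
    simp [msz]

/-- class sums of a vector -/
noncomputable def csum (s t : ℕ) (w : Fin (s+t+5) → ℝ) (d : Fin 7) : ℝ :=
  ∑ j ∈ Finset.univ.filter (fun j : Fin (s+t+5) => cls s j.val = d), w j

lemma entryM (i j : Fin (s+t+5)) :
    signMat (s+t+5) (H2edge s t) i j = if i = j then 0 else Pm (cls s i.val) (cls s j.val) := by
  by_cases h : i = j
  · simp [signMat, h]
  · simp only [signMat, Matrix.of_apply, if_neg h]
    exact @key15 s t i j i.isLt j.isLt (fun hv => h (Fin.ext hv)) (Classical.propDecidable _)

lemma rowsum (w : Fin (s+t+5) → ℝ) (i : Fin (s+t+5)) :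
    (signMat (s+t+5) (H2edge s t) *ᵥ w) i
      = (∑ d : Fin 7, Pm (cls s i.val) d * csum s t w d) - w i := by
  have h1 : (signMat (s+t+5) (H2edge s t) *ᵥ w) i
      = ∑ j : Fin (s+t+5), (if i = j then 0 else Pm (cls s i.val) (cls s j.val)) * w j := by
    simp only [Matrix.mulVec, dotProduct]
    exact Finset.sum_congr rfl fun j _ => by rw [entryM]
  rw [h1]
  have h2 : ∀ j : Fin (s+t+5), (if i = j then 0 else Pm (cls s i.val) (cls s j.val)) * w j
      = Pm (cls s i.val) (cls s j.val) * w j - (if j = i then w i else 0) := by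
    intro j
    by_cases h : i = j
    · subst h; rw [if_pos rfl, if_pos rfl, Pm_diag]; ring
    · rw [if_neg h, if_neg (Ne.symm h)]; ring
  rw [Finset.sum_congr rfl fun j _ => h2 j, Finset.sum_sub_distrib,
    Finset.sum_ite_eq' Finset.univ i (fun _ => w i), if_pos (Finset.mem_univ i)]
  congr 1
  rw [← Finset.sum_fiberwise Finset.univ (fun j : Fin (s+t+5) => cls s j.val)
    (fun j => Pm (cls s i.val) (cls s j.val) * w j)]
  refine Finset.sum_congr rfl fun d _ => ?_
  rw [csum, Finset.mul_sum]
  refine Finset.sum_congr rfl fun j hj => ?_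
  rw [(Finset.mem_filter.1 hj).2]

lemma csum_lift (v : Fin 7 → ℝ) (d : Fin 7) :
    csum s t (fun i => v (cls s i.val)) d = (msz s t d : ℝ) * v d := by
  rw [csum]
  rw [Finset.sum_congr rfl (fun j hj => by rw [(Finset.mem_filter.1 hj).2])]
  rw [Finset.sum_const, card_fiber, nsmul_eq_mul]

lemma lift_eig (v : Fin 7 → ℝ) :
    signMat (s+t+5) (H2edge s t) *ᵥ (fun i => v (cls s i.val))
      = fun i => (Q4 s t *ᵥ v) (cls s i.val) := by
  funext i
  rw [rowsum]
  have hQ : (Q4 s t *ᵥ v) (cls s i.val)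
      = ∑ d : Fin 7, ((msz s t d : ℝ) * Pm (cls s i.val) d
          - (if cls s i.val = d then 1 else 0)) * v d := by
    simp only [Matrix.mulVec, dotProduct]
    exact Finset.sum_congr rfl fun d _ => by rw [Q4_eq']
  rw [hQ]
  simp only [sub_mul, Finset.sum_sub_distrib, ite_mul, one_mul, zero_mul,
    Finset.sum_ite_eq, Finset.mem_univ, if_true]
  congr 1
  refine Finset.sum_congr rfl fun d _ => ?_
  rw [csum_lift]
  ring

lemma csum_eig (w : Fin (s+t+5) → ℝ) (μ : ℝ)
    (hw : signMat (s+t+5) (H2edge s t) *ᵥ w = μ • w) :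
    (Q4 s t)ᵀ *ᵥ csum s t w = μ • csum s t w := by
  funext d
  have h1 : ∀ i : Fin (s+t+5), cls s i.val = d →
      μ * w i = (∑ c : Fin 7, Pm d c * csum s t w c) - w i := by
    intro i hi
    have h := congrFun hw i
    rw [Pi.smul_apply, smul_eq_mul] at h
    rw [← h, rowsum, hi]
  have h2 : μ * csum s t w d
      = (msz s t d : ℝ) * (∑ c : Fin 7, Pm d c * csum s t w c) - csum s t w d := by
    rw [csum, Finset.mul_sum]
    rw [Finset.sum_congr rfl (fun i hi => h1 i (Finset.mem_filter.1 hi).2)]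
    rw [Finset.sum_sub_distrib]
    congr 1
    rw [Finset.sum_const, card_fiber, nsmul_eq_mul]
  have h3 : ((Q4 s t)ᵀ *ᵥ csum s t w) d
      = (msz s t d : ℝ) * (∑ c : Fin 7, Pm d c * csum s t w c) - csum s t w d := by
    simp only [Matrix.mulVec, dotProduct, Matrix.transpose_apply]
    rw [Finset.sum_congr rfl (fun c (_ : c ∈ Finset.univ) => by rw [Q4_eq' s t c d])]
    simp only [sub_mul, Finset.sum_sub_distrib, ite_mul, one_mul, zero_mul,
      Finset.sum_ite_eq', Finset.mem_univ, if_true]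
    congr 1
    rw [Finset.mul_sum]
    refine Finset.sum_congr rfl fun c _ => ?_
    rw [Pm_symm]
    ring
  rw [h3, Pi.smul_apply, smul_eq_mul, h2]

lemma zero_csum (w : Fin (s+t+5) → ℝ) (h : ∀ d, csum s t w d = 0) :
    signMat (s+t+5) (H2edge s t) *ᵥ w = (-1 : ℝ) • w := by
  funext i
  rw [rowsum, Pi.smul_apply, smul_eq_mul]
  rw [Finset.sum_congr rfl (fun d (_ : d ∈ Finset.univ) => by rw [h d, mul_zero])]
  simp

lemma cls_surj (hs : 1 ≤ s) (ht : 1 ≤ t) (d : Fin 7) :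
    ∃ i : Fin (s+t+5), cls s i.val = d := by
  fin_cases d
  · exact ⟨⟨0, by omega⟩, by show cls s 0 = _; exact cls_lt5 (by omega)⟩
  · exact ⟨⟨1, by omega⟩, by show cls s 1 = _; exact cls_lt5 (by omega)⟩
  · exact ⟨⟨2, by omega⟩, by show cls s 2 = _; exact cls_lt5 (by omega)⟩
  · exact ⟨⟨3, by omega⟩, by show cls s 3 = _; exact cls_lt5 (by omega)⟩
  · exact ⟨⟨4, by omega⟩, by show cls s 4 = _; exact cls_lt5 (by omega)⟩
  · exact ⟨⟨5, by omega⟩, by show cls s 5 = _; exact cls5 (by omega) (by omega)⟩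
  · exact ⟨⟨s+5, by omega⟩, by show cls s (s+5) = _; exact cls6 (by omega)⟩

lemma hermM : (signMat (s+t+5) (H2edge s t)).IsHermitian := by
  ext i j
  rw [Matrix.conjTranspose_apply, star_trivial, entryM, entryM]
  by_cases h : i = j
  · rw [if_pos h, if_pos h.symm]
  · rw [if_neg h, if_neg (Ne.symm h), Pm_symm]

lemma traceM : Matrix.trace (signMat (s+t+5) (H2edge s t)) = 0 := by
  simp [Matrix.trace, Matrix.diag, signMat]

end Aux15b


lemma mem_spec_iff {k : ℕ} (A : Matrix (Fin k) (Fin k) ℝ) (μ : ℝ) :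
    μ ∈ spectrum ℝ A ↔ ∃ v, v ≠ 0 ∧ A *ᵥ v = μ • v := by
  rw [← AlgEquiv.spectrum_eq (Matrix.toLinAlgEquiv' (R := ℝ) (n := Fin k)) A,
    ← Module.End.hasEigenvalue_iff_mem_spectrum]
  constructor
  · intro h
    obtain ⟨v, hv⟩ := h.exists_hasEigenvector
    refine ⟨v, hv.2, ?_⟩
    have h2 := hv.apply_eq_smul
    rwa [Matrix.toLinAlgEquiv'_apply] at h2
  · rintro ⟨v, hv0, hv⟩
    exact Module.End.hasEigenvalue_of_hasEigenvector
      ⟨Module.End.mem_eigenspace_iff.mpr (by rwa [Matrix.toLinAlgEquiv'_apply]), hv0⟩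

lemma spec_transpose {k : ℕ} (A : Matrix (Fin k) (Fin k) ℝ) :
    spectrum ℝ Aᵀ = spectrum ℝ A := by
  ext μ
  rw [spectrum.mem_iff, spectrum.mem_iff, Matrix.isUnit_iff_isUnit_det,
    Matrix.isUnit_iff_isUnit_det]
  have h : algebraMap ℝ (Matrix (Fin k) (Fin k) ℝ) μ - Aᵀ
      = (algebraMap ℝ (Matrix (Fin k) (Fin k) ℝ) μ - A)ᵀ := by
    rw [Matrix.transpose_sub]
    congr 1
    rw [Matrix.algebraMap_eq_diagonal, Matrix.diagonal_transpose]
  rw [h, Matrix.det_transpose]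

lemma trace_eq_sum_eigs {k : ℕ} {A : Matrix (Fin k) (Fin k) ℝ} (hA : A.IsHermitian) :
    Matrix.trace A = ∑ i, hA.eigenvalues i := by
  conv_lhs => rw [hA.spectral_theorem]
  rw [Unitary.conjStarAlgAut_apply, Matrix.trace_mul_cycle, Unitary.coe_star_mul_self, Matrix.one_mul,
    Matrix.trace_diagonal]
  simp [RCLike.ofReal_real_eq_id]

lemma exists_nonneg (s t : ℕ) :
    ∃ μ ∈ spectrum ℝ (signMat (s+t+5) (H2edge s t)), 0 ≤ μ := by
  by_contra hcon
  push_neg at hcon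
  have hA := hermM s t
  have hall : ∀ i, hA.eigenvalues i < 0 := fun i =>
    hcon _ (hA.eigenvalues_mem_spectrum_real i)
  have hsum : ∑ i, hA.eigenvalues i < 0 :=
    Finset.sum_neg (fun i _ => hall i) ⟨⟨0, by omega⟩, Finset.mem_univ _⟩
  rw [← trace_eq_sum_eigs hA, traceM] at hsum
  exact lt_irrefl 0 hsum



/-- for `s, t ≥ 1` and `n = s + t + 5`,
`λ₁(A(K_n,H₂(s,t)⁻)) = λ₁(Q₄(s,t))`. -/
theorem stmt15 (s t n : ℕ) (hs : 1 ≤ s) (ht : 1 ≤ t) (hn : n = s + t + 5) :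
    lam1 (signMat n (H2edge s t)) = lam1 (Q4 s t) := by
  subst hn
  have hfinM := Matrix.finite_spectrum (signMat (s+t+5) (H2edge s t))
  have hfinQ := Matrix.finite_spectrum (Q4 s t)
  have hbddM : BddAbove (spectrum ℝ (signMat (s+t+5) (H2edge s t))) := hfinM.bddAbove
  have hneM : (spectrum ℝ (signMat (s+t+5) (H2edge s t))).Nonempty :=
    ⟨_, (hermM s t).eigenvalues_mem_spectrum_real ⟨0, by omega⟩⟩
  set L := sSup (spectrum ℝ (signMat (s+t+5) (H2edge s t))) with hL
  have hLmem : L ∈ spectrum ℝ (signMat (s+t+5) (H2edge s t)) := hneM.csSup_mem hfinM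
  obtain ⟨μ0, hμ0m, hμ0⟩ := exists_nonneg s t
  have hL0 : (0:ℝ) ≤ L := le_trans hμ0 (le_csSup hbddM hμ0m)
  obtain ⟨w, hw0, hww⟩ := (mem_spec_iff _ _).1 hLmem
  have hσ : csum s t w ≠ 0 := by
    intro hz
    have h1 := zero_csum s t w (fun d => congrFun hz d)
    rw [hww] at h1
    obtain ⟨i, hi⟩ := Function.ne_iff.1 hw0
    have h2 := congrFun h1 i
    rw [Pi.smul_apply, Pi.smul_apply, smul_eq_mul, smul_eq_mul] at h2
    have hL1 : L = -1 := mul_right_cancel₀ hi h2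
    linarith
  have hLQ : L ∈ spectrum ℝ (Q4 s t) := by
    rw [← spec_transpose]
    exact (mem_spec_iff _ _).2 ⟨csum s t w, hσ, csum_eig s t w L hww⟩
  unfold lam1
  apply le_antisymm
  · exact le_csSup hfinQ.bddAbove hLQ
  · refine csSup_le ⟨L, hLQ⟩ fun μ hμ => ?_
    obtain ⟨v, hv0, hv⟩ := (mem_spec_iff _ _).1 hμ
    have hvm : μ ∈ spectrum ℝ (signMat (s+t+5) (H2edge s t)) := by
      refine (mem_spec_iff _ _).2 ⟨fun i => v (cls s i.val), ?_, ?_⟩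
      · obtain ⟨d, hd⟩ := Function.ne_iff.1 hv0
        obtain ⟨i, hi⟩ := cls_surj s t hs ht d
        exact Function.ne_iff.2 ⟨i, by simpa [hi] using hd⟩
      · rw [lift_eig s t v, hv]
        funext i
        simp
    exact le_csSup hbddM hvm
end
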